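/- arXiv:0810.3957 — 5 statements merged into one kernel-verified Lean document; each statement's English description precedes it below -/
import Mathlib

section
/- Under the standing assumptions on P and 𝒟, for every p ∈ P the open neighbourhood B(T(p), cM/(d+1)) is contained in the interior of S(p). -/
noncomputable section

open scoped Classical

open Metric

variable {d : ℕ}

/-- `P` is `M`-separated. -/
def IsSeparatedSet (M : ℝ) (P : Set (EuclideanSpace ℝ (Fin d))) : Prop :=
  ∀ p ∈ P, ∀ q ∈ P, p ≠ q → M ≤ dist p q

/-- `P` is `M`-syndetic. -/
def IsSyndeticSet (M : ℝ) (P : Set (EuclideanSpace ℝ (Fin d))) : Prop :=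
  ∀ x : EuclideanSpace ℝ (Fin d), ∃ p ∈ P, dist x p < M

/-- `T(p,τ)`: the points of `Conv(τ)` whose barycentric coordinate at `p`
is maximal. -/
def Tcell (τ : Finset (EuclideanSpace ℝ (Fin d))) (p : EuclideanSpace ℝ (Fin d)) :
    Set (EuclideanSpace ℝ (Fin d)) :=
  {x | ∃ lam : EuclideanSpace ℝ (Fin d) → ℝ,
    (∀ q ∈ τ, 0 ≤ lam q) ∧ (∑ q ∈ τ, lam q) = 1 ∧ (∀ q ∈ τ, lam q ≤ lam p) ∧
    x = ∑ q ∈ τ, lam q • q}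

/-- `T(p) = ⋃_{τ ∈ 𝒟, p ∈ τ} T(p,τ)`. -/
def Tset (𝒟 : Set (Finset (EuclideanSpace ℝ (Fin d)))) (p : EuclideanSpace ℝ (Fin d)) :
    Set (EuclideanSpace ℝ (Fin d)) :=
  ⋃ τ ∈ {τ ∈ 𝒟 | p ∈ τ}, Tcell τ p

/-- `S(p) = ⋃_{τ ∈ 𝒟, p ∈ τ} Conv(τ)`. -/
def Sset (𝒟 : Set (Finset (EuclideanSpace ℝ (Fin d)))) (p : EuclideanSpace ℝ (Fin d)) :
    Set (EuclideanSpace ℝ (Fin d)) :=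
  ⋃ τ ∈ {τ ∈ 𝒟 | p ∈ τ}, convexHull ℝ (↑τ : Set (EuclideanSpace ℝ (Fin d)))

/-- Standing assumptions: `P` is `M`-separated and `2M`-syndetic and `𝒟` is a
collection of `(d+1)`-element affinely independent subsets of `P` such that:
(i) the sets `Conv(τ)`, `τ ∈ 𝒟`, cover `ℝ^d` with pairwise disjoint interiors;
(ii) any two cells meet face to face; (iii) every `p ∈ P` lies in some `τ ∈ 𝒟`;
(iv) every `τ ∈ 𝒟` lies in a closed ball of radius `< √5·M`;
(v) `d(p, H(τ∖{p})) > c·M` for every `τ ∈ 𝒟` and `p ∈ τ`. -/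
def Standing (M c : ℝ) (P : Set (EuclideanSpace ℝ (Fin d)))
    (𝒟 : Set (Finset (EuclideanSpace ℝ (Fin d)))) : Prop :=
  IsSeparatedSet M P ∧ IsSyndeticSet (2 * M) P ∧
  (∀ τ ∈ 𝒟, τ.card = d + 1 ∧ (↑τ : Set (EuclideanSpace ℝ (Fin d))) ⊆ P ∧
    AffineIndependent ℝ (fun q : (τ : Set (EuclideanSpace ℝ (Fin d))) =>
      (q : EuclideanSpace ℝ (Fin d)))) ∧
  (⋃ τ ∈ 𝒟, convexHull ℝ (↑τ : Set (EuclideanSpace ℝ (Fin d)))) = Set.univ ∧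
  (∀ τ ∈ 𝒟, ∀ τ' ∈ 𝒟, τ ≠ τ' →
    interior (convexHull ℝ (↑τ : Set (EuclideanSpace ℝ (Fin d)))) ∩
      interior (convexHull ℝ (↑τ' : Set (EuclideanSpace ℝ (Fin d)))) = ∅) ∧
  (∀ τ ∈ 𝒟, ∀ τ' ∈ 𝒟,
    convexHull ℝ (↑τ : Set (EuclideanSpace ℝ (Fin d))) ∩
      convexHull ℝ (↑τ' : Set (EuclideanSpace ℝ (Fin d)))
    = convexHull ℝ (↑(τ ∩ τ') : Set (EuclideanSpace ℝ (Fin d)))) ∧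
  (∀ p ∈ P, ∃ τ ∈ 𝒟, p ∈ τ) ∧
  (∀ τ ∈ 𝒟, ∃ z r, r < Real.sqrt 5 * M ∧
    (↑τ : Set (EuclideanSpace ℝ (Fin d))) ⊆ closedBall z r) ∧
  (∀ τ ∈ 𝒟, ∀ p ∈ τ,
    c * M < Metric.infDist p
      (affineSpan ℝ (↑(τ.erase p) : Set (EuclideanSpace ℝ (Fin d)))
        : Set (EuclideanSpace ℝ (Fin d))))



theorem sep_finite {d : ℕ} {M : ℝ} (hM : 0 < M) {P : Set (EuclideanSpace ℝ (Fin d))}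
    (hsep : ∀ p ∈ P, ∀ q ∈ P, p ≠ q → M ≤ dist p q)
    (z : EuclideanSpace ℝ (Fin d)) (R : ℝ) : (P ∩ Metric.closedBall z R).Finite := by
  classical
  obtain ⟨t, htf, hcov⟩ := totallyBounded_iff.mp
    (isCompact_closedBall z R).totallyBounded (M / 2) (by linarith)
  set S := P ∩ Metric.closedBall z R with hS
  have key : ∀ x, x ∈ S → ∃ y, y ∈ t ∧ x ∈ Metric.ball y (M / 2) := by
    intro x hx
    have := hcov hx.2
    simpa using this
  set F : EuclideanSpace ℝ (Fin d) → EuclideanSpace ℝ (Fin d) :=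
    fun x => if h : x ∈ S then (key x h).choose else z with hF
  have hFt : ∀ x (hx : x ∈ S), F x ∈ t ∧ x ∈ Metric.ball (F x) (M / 2) := by
    intro x hx
    rw [hF]
    simp only [dif_pos hx]
    exact ⟨(key x hx).choose_spec.1, (key x hx).choose_spec.2⟩
  have hinj : Set.InjOn F S := by
    intro a ha b hb hab
    by_contra hne
    have h1 := (hFt a ha).2
    have h2 := (hFt b hb).2
    rw [hab] at h1
    have : dist a b < M := by
      calc dist a b ≤ dist a (F b) + dist (F b) b := dist_triangle _ _ _
        _ < M / 2 + M / 2 := by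
            rw [Metric.mem_ball] at h1 h2
            rw [dist_comm (F b) b]
            exact add_lt_add h1 h2
        _ = M := by ring
    exact absurd (hsep a ha.1 b hb.1 hne) (not_le.mpr this)
  exact Set.Finite.of_finite_image (htf.subset (fun y ⟨x, hx, hxy⟩ => hxy ▸ (hFt x hx).1)) hinj

theorem cells_finite {d : ℕ} {M : ℝ} (hM : 0 < M) {P : Set (EuclideanSpace ℝ (Fin d))}
    {𝒟 : Set (Finset (EuclideanSpace ℝ (Fin d)))}
    (hsep : ∀ p ∈ P, ∀ q ∈ P, p ≠ q → M ≤ dist p q)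
    (hsubP : ∀ τ ∈ 𝒟, (↑τ : Set (EuclideanSpace ℝ (Fin d))) ⊆ P)
    (hbound : ∀ τ ∈ 𝒟, ∃ z r, r < Real.sqrt 5 * M ∧
      (↑τ : Set (EuclideanSpace ℝ (Fin d))) ⊆ Metric.closedBall z r)
    (z : EuclideanSpace ℝ (Fin d)) (R : ℝ) :
    {τ | τ ∈ 𝒟 ∧ (convexHull ℝ (↑τ : Set (EuclideanSpace ℝ (Fin d))) ∩
      Metric.ball z R).Nonempty}.Finite := by
  classical
  set B := P ∩ Metric.closedBall z (R + 2 * (Real.sqrt 5 * M)) with hB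
  have hBfin : B.Finite := sep_finite hM hsep _ _
  have hsub : ∀ τ, τ ∈ 𝒟 → (convexHull ℝ (↑τ : Set (EuclideanSpace ℝ (Fin d))) ∩
      Metric.ball z R).Nonempty → (↑τ : Set (EuclideanSpace ℝ (Fin d))) ⊆ B := by
    rintro τ hτ ⟨y, hyh, hyb⟩ q hq
    obtain ⟨z₀, r, hr, hsubB⟩ := hbound τ hτ
    have hhull : convexHull ℝ (↑τ : Set (EuclideanSpace ℝ (Fin d))) ⊆ Metric.closedBall z₀ r :=
      convexHull_min hsubB (convex_closedBall _ _)
    refine ⟨hsubP τ hτ hq, ?_⟩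
    rw [Metric.mem_closedBall]
    have h1 : dist q z₀ ≤ r := hsubB hq
    have h2 : dist z₀ y ≤ r := by rw [dist_comm]; exact hhull hyh
    have h3 : dist y z < R := hyb
    calc dist q z ≤ dist q z₀ + dist z₀ y + dist y z := dist_triangle4 _ _ _ _
      _ ≤ r + r + R := by linarith
      _ ≤ R + 2 * (Real.sqrt 5 * M) := by linarith
  apply Set.Finite.of_finite_image (f := fun τ : Finset (EuclideanSpace ℝ (Fin d)) =>
    (↑τ : Set (EuclideanSpace ℝ (Fin d))))
  · apply hBfin.finite_subsets.subset
    rintro u ⟨τ, ⟨hτ, hne⟩, rfl⟩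
    exact hsub τ hτ hne
  · exact Finset.coe_injective.injOn



/-- the affine basis given by a cell -/
def cellBasis (τ : Finset (EuclideanSpace ℝ (Fin d)))
    (hind : AffineIndependent ℝ (fun q : (τ : Set (EuclideanSpace ℝ (Fin d))) =>
      (q : EuclideanSpace ℝ (Fin d))))
    (hcard : τ.card = d + 1) :
    AffineBasis (τ : Set (EuclideanSpace ℝ (Fin d))) ℝ (EuclideanSpace ℝ (Fin d)) :=
  ⟨fun q => (q : EuclideanSpace ℝ (Fin d)), hind, by
    rw [hind.affineSpan_eq_top_iff_card_eq_finrank_add_one]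
    simp [finrank_euclideanSpace_fin, hcard]⟩

/-- the barycentric coordinate of `p` in the cell `τ`, as a total function -/
def coordFn (τ : Finset (EuclideanSpace ℝ (Fin d))) (p : EuclideanSpace ℝ (Fin d)) :
    EuclideanSpace ℝ (Fin d) →ᵃ[ℝ] ℝ :=
  if h : (AffineIndependent ℝ (fun q : (τ : Set (EuclideanSpace ℝ (Fin d))) =>
      (q : EuclideanSpace ℝ (Fin d)))) ∧ τ.card = d + 1 ∧ p ∈ τ
  then (cellBasis τ h.1 h.2.1).coord ⟨p, h.2.2⟩ else 0

theorem coordFn_comb {τ σ : Finset (EuclideanSpace ℝ (Fin d))}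
    (hind : AffineIndependent ℝ (fun q : (τ : Set (EuclideanSpace ℝ (Fin d))) =>
      (q : EuclideanSpace ℝ (Fin d))))
    (hcard : τ.card = d + 1) {p : EuclideanSpace ℝ (Fin d)} (hp : p ∈ τ)
    (hσ : σ ⊆ τ) {w : EuclideanSpace ℝ (Fin d) → ℝ}
    (hw : ∑ q ∈ σ, w q = 1) {y : EuclideanSpace ℝ (Fin d)}
    (hy : y = ∑ q ∈ σ, w q • q) :
    coordFn τ p y = if p ∈ σ then w p else 0 := by
  classical
  have h : (AffineIndependent ℝ (fun q : (τ : Set (EuclideanSpace ℝ (Fin d))) =>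
      (q : EuclideanSpace ℝ (Fin d)))) ∧ τ.card = d + 1 ∧ p ∈ τ := ⟨hind, hcard, hp⟩
  rw [coordFn, dif_pos h]
  set b := cellBasis τ h.1 h.2.1 with hb
  set w' : EuclideanSpace ℝ (Fin d) → ℝ := fun q => if q ∈ σ then w q else 0 with hw'
  have hsum' : ∑ q ∈ τ, w' q = 1 := by
    rw [hw']
    rw [Finset.sum_ite_mem, Finset.inter_eq_right.mpr hσ]
    exact hw
  have hmemiff : ∀ x, x ∈ τ ↔ x ∈ (τ : Set (EuclideanSpace ℝ (Fin d))) := by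
    intro x; simp
  have hW : ∑ i : (τ : Set (EuclideanSpace ℝ (Fin d))), w' ↑i = 1 := by
    rw [← Finset.sum_subtype τ hmemiff w']
    exact hsum'
  have hstep : (∑ q ∈ τ, w' q • q) = ∑ q ∈ σ, w q • q := by
    have e1 : ∀ q ∈ τ, w' q • q = if q ∈ σ then w q • q else 0 := by
      intro q _
      by_cases hqs : q ∈ σ <;> simp [hw', hqs]
    rw [Finset.sum_congr rfl e1, Finset.sum_ite_mem, Finset.inter_eq_right.mpr hσ]
  have hyc : y = Finset.univ.affineCombination ℝ
      (fun i : (τ : Set (EuclideanSpace ℝ (Fin d))) => (i : EuclideanSpace ℝ (Fin d)))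
      (fun i => w' ↑i) := by
    calc y = ∑ q ∈ σ, w q • q := hy
      _ = ∑ q ∈ τ, w' q • q := hstep.symm
      _ = ∑ i : (τ : Set (EuclideanSpace ℝ (Fin d))), w' ↑i • (i : EuclideanSpace ℝ (Fin d)) :=
          Finset.sum_subtype τ hmemiff _
      _ = Finset.univ.affineCombination ℝ
          (fun i : (τ : Set (EuclideanSpace ℝ (Fin d))) => (i : EuclideanSpace ℝ (Fin d)))
          (fun i => w' ↑i) :=
          (Finset.univ.affineCombination_eq_linear_combination _ _ hW).symm
  have hcoord := b.coord_apply_combination_of_mem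
    (Finset.mem_univ (⟨p, h.2.2⟩ : (τ : Set (EuclideanSpace ℝ (Fin d))))) hW
  rw [show ⇑b = (fun i : (τ : Set (EuclideanSpace ℝ (Fin d))) =>
    (i : EuclideanSpace ℝ (Fin d))) from rfl] at hcoord
  rw [← hyc] at hcoord
  rw [hcoord]

theorem coordFn_self {τ : Finset (EuclideanSpace ℝ (Fin d))}
    (hind : AffineIndependent ℝ (fun q : (τ : Set (EuclideanSpace ℝ (Fin d))) =>
      (q : EuclideanSpace ℝ (Fin d))))
    (hcard : τ.card = d + 1) {p : EuclideanSpace ℝ (Fin d)} (hp : p ∈ τ) :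
    coordFn τ p p = 1 := by
  have h := coordFn_comb hind hcard hp (Finset.singleton_subset_iff.mpr hp)
    (w := fun _ => (1 : ℝ)) (by simp) (y := p) (by simp)
  simpa using h

theorem coordFn_zero_mem {τ : Finset (EuclideanSpace ℝ (Fin d))}
    (hind : AffineIndependent ℝ (fun q : (τ : Set (EuclideanSpace ℝ (Fin d))) =>
      (q : EuclideanSpace ℝ (Fin d))))
    (hcard : τ.card = d + 1) {p : EuclideanSpace ℝ (Fin d)} (hp : p ∈ τ)
    {y : EuclideanSpace ℝ (Fin d)} (h0 : coordFn τ p y = 0) :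
    y ∈ (affineSpan ℝ (↑(τ.erase p) : Set (EuclideanSpace ℝ (Fin d))) :
      Set (EuclideanSpace ℝ (Fin d))) := by
  classical
  have h : (AffineIndependent ℝ (fun q : (τ : Set (EuclideanSpace ℝ (Fin d))) =>
      (q : EuclideanSpace ℝ (Fin d)))) ∧ τ.card = d + 1 ∧ p ∈ τ := ⟨hind, hcard, hp⟩
  rw [coordFn, dif_pos h] at h0
  set b := cellBasis τ h.1 h.2.1 with hb
  set i₀ : ↥(τ : Set (EuclideanSpace ℝ (Fin d))) := ⟨p, h.2.2⟩ with hi₀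
  set W : ↥(τ : Set (EuclideanSpace ℝ (Fin d))) → ℝ := fun i => b.coord i y with hWdef
  have hWi₀ : W i₀ = 0 := h0
  have hWsum : ∑ i, W i = 1 := b.sum_coord_apply_eq_one y
  have hyW : Finset.univ.affineCombination ℝ ⇑b W = y := b.affineCombination_coord_eq_self y
  set s' : Finset ↥(τ : Set (EuclideanSpace ℝ (Fin d))) := Finset.univ.erase i₀ with hs'
  have hWind : W = Set.indicator ↑s' W := by
    funext i
    by_cases hi : i = i₀
    · rw [hi, Set.indicator_of_notMem (by simp [hs'])]
      exact hWi₀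
    · rw [Set.indicator_of_mem (by simp [hs', hi])]
  have hy' : s'.affineCombination ℝ ⇑b W = y := by
    rw [Finset.affineCombination_indicator_subset W ⇑b (Finset.subset_univ s'), ← hWind, hyW]
  have hWs' : ∑ i ∈ s', W i = 1 := by
    rw [Finset.sum_erase_eq_sub (Finset.mem_univ i₀), hWsum, hWi₀, sub_zero]
  set e : ↥(↑(τ.erase p) : Set (EuclideanSpace ℝ (Fin d))) ↪ ↥(τ : Set (EuclideanSpace ℝ (Fin d))) :=
    ⟨fun q => ⟨(q : EuclideanSpace ℝ (Fin d)),
        Finset.mem_of_mem_erase (Finset.mem_coe.mp q.2)⟩,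
      fun a b hab => Subtype.ext (by simpa using congrArg Subtype.val hab)⟩ with he
  have hmap : s' = Finset.univ.map e := by
    ext i
    simp only [hs', Finset.mem_erase, Finset.mem_univ, and_true, Finset.mem_map, true_and]
    constructor
    · intro hi
      have hie : (i : EuclideanSpace ℝ (Fin d)) ∈ τ.erase p := by
        refine Finset.mem_erase.mpr ⟨?_, Finset.mem_coe.mp i.2⟩
        intro hip
        exact hi (Subtype.ext hip)
      exact ⟨⟨(i : EuclideanSpace ℝ (Fin d)), Finset.mem_coe.mpr hie⟩, Subtype.ext rfl⟩
    · rintro ⟨q, rfl⟩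
      intro hqe
      have hqp : (q : EuclideanSpace ℝ (Fin d)) = p := congrArg Subtype.val hqe
      exact (Finset.mem_erase.mp (Finset.mem_coe.mp q.2)).1 hqp
  have hsum2 : ∑ q : (↑(τ.erase p) : Set (EuclideanSpace ℝ (Fin d))), (W ∘ e) q = 1 := by
    have h2 := Finset.sum_map Finset.univ e W
    rw [← hmap] at h2
    simp only [Function.comp]
    rw [← h2]
    exact hWs'
  have hcomb : Finset.univ.affineCombination ℝ (⇑b ∘ e) (W ∘ e) = y := by
    rw [← Finset.univ.affineCombination_map e W ⇑b, ← hmap, hy']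
  have hmem := affineCombination_mem_affineSpan (s := Finset.univ) (w := W ∘ e)
    hsum2 (⇑b ∘ e)
  rw [hcomb] at hmem
  have hrange : Set.range (⇑b ∘ e) = (↑(τ.erase p) : Set (EuclideanSpace ℝ (Fin d))) := by
    ext v
    constructor
    · rintro ⟨q, rfl⟩
      exact q.2
    · intro hv
      exact ⟨⟨v, hv⟩, rfl⟩
  rw [hrange] at hmem
  exact hmem

theorem coordFn_lip {τ : Finset (EuclideanSpace ℝ (Fin d))}
    (hind : AffineIndependent ℝ (fun q : (τ : Set (EuclideanSpace ℝ (Fin d))) =>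
      (q : EuclideanSpace ℝ (Fin d))))
    (hcard : τ.card = d + 1) {p : EuclideanSpace ℝ (Fin d)} (hp : p ∈ τ)
    {cM : ℝ} (hcM : 0 < cM)
    (hfar : cM < Metric.infDist p ((affineSpan ℝ
      (↑(τ.erase p) : Set (EuclideanSpace ℝ (Fin d)))) :
        Set (EuclideanSpace ℝ (Fin d))))
    (a b : EuclideanSpace ℝ (Fin d)) :
    |coordFn τ p a - coordFn τ p b| ≤ dist a b / cM := by
  classical
  set f := coordFn τ p with hf
  by_cases h0 : f a - f b = 0
  · rw [h0, abs_zero]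
    positivity
  · set s : ℝ := f a - f b with hs
    set v := s⁻¹ • (b - a) with hv
    set wpt := v + p with hw
    have hlin : f.linear (b - a) = f b - f a := by
      have := f.linearMap_vsub b a
      simpa [vsub_eq_sub] using this
    have hfp : f p = 1 := coordFn_self hind hcard hp
    have hfw : f wpt = 0 := by
      have h1 : f wpt = f.linear v + f p := by
        rw [hw]
        have := f.map_vadd p v
        simpa [vadd_eq_add] using this
      rw [h1, hv, f.linear.map_smul, smul_eq_mul, hlin, hfp]
      have : s⁻¹ * (f b - f a) = -1 := by
        rw [show f b - f a = -s from by rw [hs]; ring]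
        field_simp
      rw [this]
      ring
    have hmem := coordFn_zero_mem hind hcard hp hfw
    have hle : cM < dist p wpt := lt_of_lt_of_le hfar (Metric.infDist_le_dist_of_mem hmem)
    have habs : 0 < |s| := abs_pos.mpr h0
    have hdw : dist p wpt = ‖b - a‖ / |s| := by
      rw [dist_eq_norm, hw, show p - (v + p) = -v from by abel, norm_neg, hv, norm_smul]
      rw [norm_inv, Real.norm_eq_abs]
      ring
    rw [hdw] at hle
    have hba : ‖b - a‖ = dist a b := by rw [dist_eq_norm, norm_sub_rev]
    have h2 : |s| * cM < ‖b - a‖ := by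
      have := (lt_div_iff₀ habs).mp hle
      linarith [this]
    have : |s| < dist a b / cM := by
      rw [lt_div_iff₀ hcM]
      linarith [h2, hba]
    exact le_of_lt this

theorem coordFn_compat {τ τ' : Finset (EuclideanSpace ℝ (Fin d))}
    (hind : AffineIndependent ℝ (fun q : (τ : Set (EuclideanSpace ℝ (Fin d))) =>
      (q : EuclideanSpace ℝ (Fin d))))
    (hcard : τ.card = d + 1)
    (hind' : AffineIndependent ℝ (fun q : (τ' : Set (EuclideanSpace ℝ (Fin d))) =>
      (q : EuclideanSpace ℝ (Fin d))))
    (hcard' : τ'.card = d + 1)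
    {p : EuclideanSpace ℝ (Fin d)} (hp : p ∈ τ) (hp' : p ∈ τ')
    (hface : convexHull ℝ (↑τ : Set (EuclideanSpace ℝ (Fin d))) ∩
      convexHull ℝ (↑τ' : Set (EuclideanSpace ℝ (Fin d)))
      = convexHull ℝ (↑(τ ∩ τ') : Set (EuclideanSpace ℝ (Fin d))))
    {y : EuclideanSpace ℝ (Fin d)}
    (hy : y ∈ convexHull ℝ (↑τ : Set (EuclideanSpace ℝ (Fin d))))
    (hy' : y ∈ convexHull ℝ (↑τ' : Set (EuclideanSpace ℝ (Fin d)))) :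
    coordFn τ p y = coordFn τ' p y := by
  classical
  have hmem : y ∈ convexHull ℝ (↑(τ ∩ τ') : Set (EuclideanSpace ℝ (Fin d))) := by
    rw [← hface]
    exact ⟨hy, hy'⟩
  rw [Finset.convexHull_eq] at hmem
  obtain ⟨w, hw0, hw1, hwc⟩ := hmem
  have hyrep : y = ∑ q ∈ τ ∩ τ', w q • q := by
    rw [← hwc, Finset.centerMass_eq_of_sum_1 _ _ hw1]
    simp
  rw [coordFn_comb hind hcard hp Finset.inter_subset_left hw1 hyrep,
    coordFn_comb hind' hcard' hp' Finset.inter_subset_right hw1 hyrep]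

theorem ball_subset_Sset {d : ℕ} (M c : ℝ) (hM : 0 < M) (hc : 0 < c)
    (P : Set (EuclideanSpace ℝ (Fin d))) (𝒟 : Set (Finset (EuclideanSpace ℝ (Fin d))))
    (hS : Standing M c P 𝒟) (p : EuclideanSpace ℝ (Fin d))
    (τ : Finset (EuclideanSpace ℝ (Fin d))) (hτ : τ ∈ 𝒟) (hpτ : p ∈ τ)
    (x : EuclideanSpace ℝ (Fin d)) (hx : x ∈ Tcell τ p) :
    Metric.ball x (c * M / (d + 1)) ⊆ Sset 𝒟 p := by
  classical
  obtain ⟨hsep, hsyn, hcells, hcover, hdisj, hface, hexist, hbound, hdist⟩ := hS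
  obtain ⟨lam, hlnn, hlsum, hlmax, hxeq⟩ := hx
  set ε := c * M / ((d : ℝ) + 1) with hεdef
  have hd1 : (0:ℝ) < (d:ℝ) + 1 := by positivity
  have hcM : (0:ℝ) < c * M := by positivity
  have hεpos : 0 < ε := by positivity
  have hcardτ : τ.card = d + 1 := (hcells τ hτ).1
  have hlamp : 1 / ((d:ℝ) + 1) ≤ lam p := by
    have h1 : (1:ℝ) ≤ ((d:ℝ) + 1) * lam p := by
      have h2 : ∑ q ∈ τ, lam q ≤ ∑ _q ∈ τ, lam p :=
        Finset.sum_le_sum (fun q hq => hlmax q hq)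
      rw [hlsum, Finset.sum_const, hcardτ, nsmul_eq_mul] at h2
      push_cast at h2
      linarith
    rw [div_le_iff₀ hd1]
    linarith
  intro y hy
  have hKlt : dist x y < ε := by
    rw [Metric.mem_ball, dist_comm] at hy
    exact hy
  set K := dist x y with hKdef
  have hK0 : 0 ≤ K := dist_nonneg
  set c₀ := K / (c * M) with hc₀def
  have hc₀0 : 0 ≤ c₀ := by positivity
  have hc₀lt : c₀ < 1 / ((d:ℝ) + 1) := by
    rw [hc₀def, div_lt_div_iff₀ hcM hd1]
    have h3 : K * ((d:ℝ) + 1) < ε * ((d:ℝ) + 1) := mul_lt_mul_of_pos_right hKlt hd1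
    have h4 : ε * ((d:ℝ) + 1) = c * M := by
      rw [hεdef]
      field_simp
    linarith
  set γ : ℝ → EuclideanSpace ℝ (Fin d) := fun t => x + t • (y - x) with hγdef
  have hγcont : Continuous γ := by
    apply Continuous.add continuous_const
    exact Continuous.smul continuous_id continuous_const
  have hγ0 : γ 0 = x := by simp [hγdef]
  have hγ1 : γ 1 = y := by simp [hγdef]
  have hγdist : ∀ s t : ℝ, dist (γ s) (γ t) = |s - t| * K := by
    intro s t
    have hsub : γ s - γ t = (s - t) • (y - x) := by
      simp only [hγdef]
      rw [sub_smul]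
      abel
    rw [dist_eq_norm, hsub, norm_smul, Real.norm_eq_abs]
    congr 1
    rw [hKdef, dist_eq_norm, norm_sub_rev]
  have hDfin : ∀ (z : EuclideanSpace ℝ (Fin d)) (R : ℝ),
      {σ | σ ∈ 𝒟 ∧ (convexHull ℝ (↑σ : Set (EuclideanSpace ℝ (Fin d))) ∩
        Metric.ball z R).Nonempty}.Finite :=
    fun z R => cells_finite hM hsep (fun σ hσ => (hcells σ hσ).2.1) hbound z R
  have hDpfin : {σ | σ ∈ 𝒟 ∧ p ∈ σ}.Finite := by
    apply (hDfin p 1).subset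
    rintro σ ⟨hσ, hpσ⟩
    exact ⟨hσ, p, subset_convexHull ℝ _ (Finset.mem_coe.mpr hpσ), Metric.mem_ball_self one_pos⟩
  set A : Set ℝ := {t | t ∈ Set.Icc (0:ℝ) 1 ∧ ∃ σ, (σ ∈ 𝒟 ∧ p ∈ σ) ∧
    γ t ∈ convexHull ℝ (↑σ : Set (EuclideanSpace ℝ (Fin d))) ∧
    lam p - c₀ * t ≤ coordFn σ p (γ t)} with hAdef
  have hxhull : x ∈ convexHull ℝ (↑τ : Set (EuclideanSpace ℝ (Fin d))) := by
    rw [Finset.convexHull_eq]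
    refine ⟨lam, hlnn, hlsum, ?_⟩
    rw [Finset.centerMass_eq_of_sum_1 _ _ hlsum, hxeq]
    simp
  have hA0 : (0:ℝ) ∈ A := by
    refine ⟨⟨le_refl 0, zero_le_one⟩, τ, ⟨hτ, hpτ⟩, ?_, ?_⟩
    · rw [hγ0]; exact hxhull
    · rw [hγ0, coordFn_comb (hcells τ hτ).2.2 hcardτ hpτ (subset_refl τ) hlsum hxeq,
        if_pos hpτ]
      linarith
  have hAbdd : BddAbove A := ⟨1, fun t ht => ht.1.2⟩
  have hAclosed : IsClosed A := by
    have hAeq : A = ⋃ σ ∈ {σ | σ ∈ 𝒟 ∧ p ∈ σ},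
        (Set.Icc (0:ℝ) 1 ∩ (γ ⁻¹' (convexHull ℝ (↑σ : Set (EuclideanSpace ℝ (Fin d)))) ∩
          {t : ℝ | lam p - c₀ * t ≤ coordFn σ p (γ t)})) := by
      ext t
      simp only [hAdef, Set.mem_setOf_eq, Set.mem_iUnion, Set.mem_inter_iff, Set.mem_preimage]
      constructor
      · rintro ⟨h1, σ, hσ, h2, h3⟩
        exact ⟨σ, hσ, h1, h2, h3⟩
      · rintro ⟨σ, hσ, h1, h2, h3⟩
        exact ⟨h1, σ, hσ, h2, h3⟩
    rw [hAeq]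
    refine Set.Finite.isClosed_biUnion hDpfin ?_
    intro σ hσ
    have hhullcl : IsClosed (convexHull ℝ (↑σ : Set (EuclideanSpace ℝ (Fin d)))) :=
      (σ.finite_toSet.isCompact_convexHull ℝ).isClosed
    refine isClosed_Icc.inter ((hhullcl.preimage hγcont).inter ?_)
    apply isClosed_le
    · exact continuous_const.sub (continuous_const.mul continuous_id)
    · exact ((coordFn σ p).continuous_of_finiteDimensional).comp hγcont
  set t₀ := sSup A with ht₀def
  have ht₀A : t₀ ∈ A := hAclosed.csSup_mem ⟨0, hA0⟩ hAbdd
  obtain ⟨⟨ht₀0, ht₀1⟩, σj, ⟨hσjD, hpσj⟩, huj, hcoordj⟩ := ht₀A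
  have ht₀top : t₀ = 1 := by
    by_contra hne
    have hlt : t₀ < 1 := lt_of_le_of_ne ht₀1 hne
    set u := γ t₀ with hudef
    have hupos : 0 < coordFn σj p u := by
      have h1 : c₀ * t₀ ≤ c₀ := by
        have := mul_le_mul_of_nonneg_left ht₀1 hc₀0
        linarith [this]
      have h2 : (0:ℝ) < 1 / ((d:ℝ) + 1) - c₀ := by linarith
      calc (0:ℝ) < 1 / ((d:ℝ) + 1) - c₀ := h2
        _ ≤ lam p - c₀ * t₀ := by linarith
        _ ≤ coordFn σj p u := hcoordj
    have hnotbad : ∀ σ' ∈ 𝒟, p ∉ σ' →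
        u ∉ convexHull ℝ (↑σ' : Set (EuclideanSpace ℝ (Fin d))) := by
      intro σ' hσ' hpσ' hu'
      have hmem : u ∈ convexHull ℝ (↑(σj ∩ σ') : Set (EuclideanSpace ℝ (Fin d))) := by
        rw [← hface σj hσjD σ' hσ']
        exact ⟨huj, hu'⟩
      rw [Finset.convexHull_eq] at hmem
      obtain ⟨w, hw0, hw1, hwc⟩ := hmem
      have hurep : u = ∑ q ∈ σj ∩ σ', w q • q := by
        rw [← hwc, Finset.centerMass_eq_of_sum_1 _ _ hw1]
        simp
      have hval := coordFn_comb (hcells σj hσjD).2.2 (hcells σj hσjD).1 hpσj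
        Finset.inter_subset_left hw1 hurep
      rw [if_neg (fun hmem2 => hpσ' (Finset.mem_of_mem_inter_right hmem2))] at hval
      rw [hval] at hupos
      exact lt_irrefl _ hupos
    set Bad := {σ' | σ' ∈ 𝒟 ∧ (convexHull ℝ (↑σ' : Set (EuclideanSpace ℝ (Fin d))) ∩
      Metric.ball u 1).Nonempty ∧ p ∉ σ'} with hBadDef
    have hBadfin : Bad.Finite := by
      apply (hDfin u 1).subset
      rintro σ' ⟨h1, h2, _⟩
      exact ⟨h1, h2⟩
    set FB := ⋃ σ' ∈ Bad, convexHull ℝ (↑σ' : Set (EuclideanSpace ℝ (Fin d))) with hFBdef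
    have hFBclosed : IsClosed FB :=
      Set.Finite.isClosed_biUnion hBadfin
        (fun σ' _ => (σ'.finite_toSet.isCompact_convexHull ℝ).isClosed)
    have huFB : u ∉ FB := by
      intro hmem
      obtain ⟨σ', hσ'Bad, h4⟩ := Set.mem_iUnion₂.mp hmem
      exact hnotbad σ' hσ'Bad.1 hσ'Bad.2.2 h4
    set Good := {σ' | (σ' ∈ 𝒟 ∧ p ∈ σ') ∧
      u ∉ convexHull ℝ (↑σ' : Set (EuclideanSpace ℝ (Fin d)))} with hGoodDef
    have hGoodfin : Good.Finite := hDpfin.subset (fun σ' h => h.1)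
    set FP := ⋃ σ' ∈ Good, convexHull ℝ (↑σ' : Set (EuclideanSpace ℝ (Fin d))) with hFPdef
    have hFPclosed : IsClosed FP :=
      Set.Finite.isClosed_biUnion hGoodfin
        (fun σ' _ => (σ'.finite_toSet.isCompact_convexHull ℝ).isClosed)
    have huFP : u ∉ FP := by
      intro hmem
      obtain ⟨σ', hσ'Good, h4⟩ := Set.mem_iUnion₂.mp hmem
      exact hσ'Good.2 h4
    have hopen : IsOpen (FB ∪ FP)ᶜ := (hFBclosed.union hFPclosed).isOpen_compl
    have humem : u ∈ (FB ∪ FP)ᶜ := by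
      intro hmem
      rcases hmem with h | h
      · exact huFB h
      · exact huFP h
    obtain ⟨δ, hδpos, hδsub⟩ := Metric.isOpen_iff.mp hopen u humem
    set δ' := min δ 1 with hδ'def
    have hδ'pos : 0 < δ' := lt_min hδpos one_pos
    have hδ'le1 : δ' ≤ 1 := min_le_right δ 1
    have hδ'sub : Metric.ball u δ' ⊆ (FB ∪ FP)ᶜ := fun z hz =>
      hδsub (Metric.ball_subset_ball (min_le_left δ 1) hz)
    set t₁ := min 1 (t₀ + δ' / (2 * (K + 1))) with ht₁def
    have hstep_pos : 0 < δ' / (2 * (K + 1)) := by positivity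
    have ht₁gt : t₀ < t₁ := lt_min hlt (by linarith)
    have ht₁le1 : t₁ ≤ 1 := min_le_left _ _
    have ht₁0 : 0 ≤ t₁ := le_trans ht₀0 (le_of_lt ht₁gt)
    have ht₁step : t₁ - t₀ ≤ δ' / (2 * (K + 1)) := by
      have h5 := min_le_right 1 (t₀ + δ' / (2 * (K + 1)))
      rw [ht₁def]
      linarith [h5]
    have hwdist : dist (γ t₁) u < δ' := by
      rw [hudef, hγdist t₁ t₀, abs_of_nonneg (by linarith : (0:ℝ) ≤ t₁ - t₀)]
      calc (t₁ - t₀) * K ≤ δ' / (2 * (K + 1)) * K :=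
            mul_le_mul_of_nonneg_right ht₁step hK0
        _ < δ' := by
            rw [div_mul_eq_mul_div, div_lt_iff₀ (by positivity : (0:ℝ) < 2 * (K + 1))]
            nlinarith
    have hwball : γ t₁ ∈ (FB ∪ FP)ᶜ := hδ'sub (Metric.mem_ball.mpr hwdist)
    have hwcover : γ t₁ ∈ ⋃ σ' ∈ 𝒟, convexHull ℝ (↑σ' : Set (EuclideanSpace ℝ (Fin d))) := by
      rw [hcover]
      exact Set.mem_univ _
    obtain ⟨σk, hσkD, hwk⟩ := Set.mem_iUnion₂.mp hwcover
    have hpk : p ∈ σk := by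
      by_contra hpk
      apply hwball
      left
      refine Set.mem_biUnion (show σk ∈ Bad from ?_) hwk
      exact ⟨hσkD, ⟨γ t₁, hwk, Metric.mem_ball.mpr (lt_of_lt_of_le hwdist hδ'le1)⟩, hpk⟩
    have huk : u ∈ convexHull ℝ (↑σk : Set (EuclideanSpace ℝ (Fin d))) := by
      by_contra huk
      apply hwball
      right
      exact Set.mem_biUnion (show σk ∈ Good from ⟨⟨hσkD, hpk⟩, huk⟩) hwk
    have hcompat : coordFn σk p u = coordFn σj p u :=
      coordFn_compat (hcells σk hσkD).2.2 (hcells σk hσkD).1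
        (hcells σj hσjD).2.2 (hcells σj hσjD).1 hpk hpσj
        (hface σk hσkD σj hσjD) huk huj
    have hlip := coordFn_lip (hcells σk hσkD).2.2 (hcells σk hσkD).1 hpk hcM
      (hdist σk hσkD p hpk) (γ t₁) u
    have hdistval : dist (γ t₁) u / (c * M) = c₀ * (t₁ - t₀) := by
      rw [hudef, hγdist t₁ t₀, abs_of_nonneg (by linarith : (0:ℝ) ≤ t₁ - t₀), hc₀def]
      ring
    have hineq : lam p - c₀ * t₁ ≤ coordFn σk p (γ t₁) := by
      have habs := abs_le.mp hlip
      have h6 : coordFn σk p u - dist (γ t₁) u / (c * M) ≤ coordFn σk p (γ t₁) := by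
        linarith [habs.1]
      have h7 : lam p - c₀ * t₀ ≤ coordFn σk p u := by
        rw [hcompat]
        exact hcoordj
      rw [hdistval] at h6
      have h8 : c₀ * (t₁ - t₀) = c₀ * t₁ - c₀ * t₀ := by ring
      linarith [h6, h7, h8]
    have ht₁A : t₁ ∈ A := ⟨⟨ht₁0, ht₁le1⟩, σk, ⟨hσkD, hpk⟩, hwk, hineq⟩
    have hle := le_csSup hAbdd ht₁A
    rw [← ht₀def] at hle
    linarith
  rw [ht₀top, hγ1] at huj
  exact Set.mem_biUnion (show σj ∈ {σ | σ ∈ 𝒟 ∧ p ∈ σ} from ⟨hσjD, hpσj⟩) huj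

/-- Under the standing assumptions, for every `p ∈ P` the open `cM/(d+1)`-neighbourhood
of `T(p)` is contained in the interior of `S(p)`. -/
theorem stmt14 (hd : 1 ≤ d) (M c : ℝ) (hM : 0 < M) (hc : 0 < c)
    (P : Set (EuclideanSpace ℝ (Fin d))) (𝒟 : Set (Finset (EuclideanSpace ℝ (Fin d))))
    (hS : Standing M c P 𝒟) (p : EuclideanSpace ℝ (Fin d)) (hp : p ∈ P) :
    {q : EuclideanSpace ℝ (Fin d) | Metric.infDist q (Tset 𝒟 p) < c * M / (d + 1)}
      ⊆ interior (Sset 𝒟 p) := by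
  classical
  intro q hq
  rw [Set.mem_setOf_eq] at hq
  obtain ⟨τ₀, hτ₀, hpτ₀⟩ := hS.2.2.2.2.2.2.1 p hp
  have hpT : p ∈ Tset 𝒟 p := by
    have hTc : p ∈ Tcell τ₀ p := by
      refine ⟨fun q' => if q' = p then 1 else 0, ?_, ?_, ?_, ?_⟩
      · intro q' _
        by_cases hq' : q' = p <;> simp [hq']
      · rw [Finset.sum_ite_eq' τ₀ p (fun _ => (1:ℝ)), if_pos hpτ₀]
      · intro q' _
        by_cases hq' : q' = p <;> simp [hq']
      · have hterm : ∀ q' ∈ τ₀, (if q' = p then (1:ℝ) else 0) • q' =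
            if q' = p then q' else 0 := by
          intro q' _
          split <;> simp
        rw [Finset.sum_congr rfl hterm, Finset.sum_ite_eq' τ₀ p (fun q' => q'), if_pos hpτ₀]
    exact Set.mem_biUnion (show τ₀ ∈ {σ | σ ∈ 𝒟 ∧ p ∈ σ} from ⟨hτ₀, hpτ₀⟩) hTc
  obtain ⟨x, hxT, hqx⟩ := (Metric.infDist_lt_iff ⟨p, hpT⟩).mp hq
  obtain ⟨τ, hτmem, hxTc⟩ := Set.mem_iUnion₂.mp hxT
  have hball := ball_subset_Sset M c hM hc P 𝒟 hS p τ hτmem.1 hτmem.2 x hxTc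
  have hsub : Metric.ball x (c * M / (d + 1)) ⊆ interior (Sset 𝒟 p) :=
    interior_maximal hball Metric.isOpen_ball
  exact hsub (Metric.mem_ball.mpr hqx)
end
end

section
/- Under the standing assumptions on P and 𝒟, the tessellation {T(p) : p ∈ P} is cM/(d+1)-separated; that is: (a) for any n ≥ 0, any distinct points p₀, p₁, …, p_n ∈ P and any point q ∈ ℝ^d with dist(q, T(p_i)) < cM/(d+1) for all i = 0,…,n, the intersection T(p₀) ∩ T(p₁) ∩ ⋯ ∩ T(p_n) is non-empty; and (b) for any d+2 distinct points p₀, …, p_{d+1} ∈ P, the intersection T(p₀) ∩ ⋯ ∩ T(p_{d+1}) is empty. -/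
noncomputable section

open scoped Classical

open Metric

variable {d : ℕ}

abbrev Euc (d : ℕ) := EuclideanSpace ℝ (Fin d)

/-- a nonneg affine combination lies in the convex hull -/
lemma rep_mem_convexHull {τ : Finset (Euc d)} {lam : Euc d → ℝ}
    (h0 : ∀ q ∈ τ, 0 ≤ lam q) (h1 : ∑ q ∈ τ, lam q = 1) :
    (∑ q ∈ τ, lam q • q) ∈ convexHull ℝ (↑τ : Set (Euc d)) := by
  rw [Finset.convexHull_eq]
  exact ⟨lam, h0, h1, by rw [Finset.centerMass_eq_of_sum_1 _ _ h1]; simp⟩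

lemma exists_rep_of_mem_convexHull {τ : Finset (Euc d)} {x : Euc d}
    (hx : x ∈ convexHull ℝ (↑τ : Set (Euc d))) :
    ∃ w : Euc d → ℝ, (∀ q ∈ τ, 0 ≤ w q) ∧ ∑ q ∈ τ, w q = 1 ∧ x = ∑ q ∈ τ, w q • q := by
  rw [Finset.convexHull_eq] at hx
  obtain ⟨w, h0, h1, h2⟩ := hx
  refine ⟨w, h0, h1, ?_⟩
  rw [← h2, Finset.centerMass_eq_of_sum_1 _ _ h1]; simp

lemma unique_rep {τ : Finset (Euc d)}
    (hind : AffineIndependent ℝ (fun q : (↑τ : Set (Euc d)) => (q : Euc d)))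
    {f g : Euc d → ℝ} (hf : ∑ q ∈ τ, f q = 1) (hg : ∑ q ∈ τ, g q = 1)
    (h : ∑ q ∈ τ, f q • q = ∑ q ∈ τ, g q • q) : ∀ q ∈ τ, f q = g q := by
  have hf' : ∑ i : (↑τ : Set (Euc d)), f i = 1 := by
    rw [← hf]; exact Finset.sum_coe_sort τ f
  have hg' : ∑ i : (↑τ : Set (Euc d)), g i = 1 := by
    rw [← hg]; exact Finset.sum_coe_sort τ g
  have hcf : (Finset.univ : Finset (↑τ : Set (Euc d))).affineCombination ℝ
      (fun q : (↑τ : Set (Euc d)) => (q : Euc d)) (fun i => f i) = ∑ q ∈ τ, f q • q := by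
    rw [Finset.affineCombination_eq_linear_combination _ _ _ hf']
    exact Finset.sum_coe_sort τ (fun q => f q • q)
  have hcg : (Finset.univ : Finset (↑τ : Set (Euc d))).affineCombination ℝ
      (fun q : (↑τ : Set (Euc d)) => (q : Euc d)) (fun i => g i) = ∑ q ∈ τ, g q • q := by
    rw [Finset.affineCombination_eq_linear_combination _ _ _ hg']
    exact Finset.sum_coe_sort τ (fun q => g q • q)
  have := (affineIndependent_iff_indicator_eq_of_affineCombination_eq ℝ
    (fun q : (↑τ : Set (Euc d)) => (q : Euc d))).1 hind Finset.univ Finset.univ _ _ hf' hg'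
    (by rw [hcf, hcg, h])
  intro q hq
  have h2 := congrFun this ⟨q, hq⟩
  simpa using h2
variable {d : ℕ}

lemma rep_compat {𝒟 : Set (Finset (Euc d))}
    (hind : ∀ τ ∈ 𝒟, AffineIndependent ℝ (fun q : (↑τ : Set (Euc d)) => (q : Euc d)))
    (hface : ∀ τ ∈ 𝒟, ∀ τ' ∈ 𝒟,
      convexHull ℝ (↑τ : Set (Euc d)) ∩ convexHull ℝ (↑τ' : Set (Euc d))
      = convexHull ℝ (↑(τ ∩ τ') : Set (Euc d)))
    {σ σ' : Finset (Euc d)} (hσ : σ ∈ 𝒟) (hσ' : σ' ∈ 𝒟)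
    {y : Euc d} {μ μ' : Euc d → ℝ}
    (hμ0 : ∀ r ∈ σ, 0 ≤ μ r) (hμ1 : ∑ r ∈ σ, μ r = 1) (hμy : y = ∑ r ∈ σ, μ r • r)
    (hμ'0 : ∀ r ∈ σ', 0 ≤ μ' r) (hμ'1 : ∑ r ∈ σ', μ' r = 1) (hμ'y : y = ∑ r ∈ σ', μ' r • r) :
    ∀ r ∈ σ, μ r = if r ∈ σ' then μ' r else 0 := by
  have hyσ : y ∈ convexHull ℝ (↑σ : Set (Euc d)) := hμy ▸ rep_mem_convexHull hμ0 hμ1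
  have hyσ' : y ∈ convexHull ℝ (↑σ' : Set (Euc d)) := hμ'y ▸ rep_mem_convexHull hμ'0 hμ'1
  have hyi : y ∈ convexHull ℝ (↑(σ ∩ σ') : Set (Euc d)) := by
    rw [← hface σ hσ σ' hσ']; exact ⟨hyσ, hyσ'⟩
  obtain ⟨ν, hν0, hν1, hνy⟩ := exists_rep_of_mem_convexHull hyi
  -- extension of ν to σ
  have hextσ1 : ∑ r ∈ σ, (if r ∈ σ' then ν r else 0) = 1 := by
    rw [Finset.sum_ite_mem, hν1]
  have hextσy : ∑ r ∈ σ, (if r ∈ σ' then ν r else 0) • r = ∑ r ∈ σ ∩ σ', ν r • r := by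
    rw [← Finset.sum_ite_mem σ σ' (fun r => ν r • r)]
    exact Finset.sum_congr rfl (fun r _ => by split <;> simp)
  have h1 : ∀ r ∈ σ, μ r = if r ∈ σ' then ν r else 0 := by
    refine unique_rep (hind σ hσ) hμ1 hextσ1 ?_
    rw [hextσy, ← hνy, ← hμy]
  -- extension of ν to σ'
  have hcomm : σ' ∩ σ = σ ∩ σ' := Finset.inter_comm _ _
  have hextσ'1 : ∑ r ∈ σ', (if r ∈ σ then ν r else 0) = 1 := by
    rw [Finset.sum_ite_mem, hcomm, hν1]
  have hextσ'y : ∑ r ∈ σ', (if r ∈ σ then ν r else 0) • r = ∑ r ∈ σ ∩ σ', ν r • r := by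
    rw [← hcomm, ← Finset.sum_ite_mem σ' σ (fun r => ν r • r)]
    exact Finset.sum_congr rfl (fun r _ => by split <;> simp)
  have h2 : ∀ r ∈ σ', μ' r = if r ∈ σ then ν r else 0 := by
    refine unique_rep (hind σ' hσ') hμ'1 hextσ'1 ?_
    rw [hextσ'y, ← hνy, ← hμ'y]
  intro r hr
  by_cases hr' : r ∈ σ'
  · simp [h1 r hr, h2 r hr', hr, hr']
  · rw [h1 r hr, if_neg hr', if_neg hr']
lemma coord_lipschitz {σ : Finset (Euc d)} {p : Euc d} (hp : p ∈ σ) {cM : ℝ} (hcM : 0 ≤ cM)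
    (hdist : cM ≤ Metric.infDist p
      (affineSpan ℝ (↑(σ.erase p) : Set (Euc d)) : Set (Euc d)))
    {y z : Euc d} {μ ν : Euc d → ℝ}
    (hμ1 : ∑ r ∈ σ, μ r = 1) (hν1 : ∑ r ∈ σ, ν r = 1)
    (hμy : y = ∑ r ∈ σ, μ r • r) (hνz : z = ∑ r ∈ σ, ν r • r) :
    cM * |μ p - ν p| ≤ dist y z := by
  set a : ℝ := μ p - ν p with ha
  by_cases ha0 : a = 0
  · simp [ha0, dist_nonneg]
  -- the coefficients over the erased set
  have hsum : ∑ r ∈ σ.erase p, (ν r - μ r) = a := by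
    have h1 : ∑ r ∈ σ.erase p, (ν r - μ r) + (ν p - μ p) = ∑ r ∈ σ, (ν r - μ r) :=
      Finset.sum_erase_add σ _ hp
    have h2 : ∑ r ∈ σ, (ν r - μ r) = 0 := by
      rw [Finset.sum_sub_distrib, hμ1, hν1, sub_self]
    have := h1.trans h2
    linarith
  have hw1 : ∑ r ∈ σ.erase p, (ν r - μ r) / a = 1 := by
    rw [← Finset.sum_div, hsum, div_self ha0]
  set w : Euc d := ∑ r ∈ σ.erase p, ((ν r - μ r) / a) • r with hw
  -- w lies in the affine span of σ.erase p
  have hwmem : w ∈ (affineSpan ℝ (↑(σ.erase p) : Set (Euc d)) : Set (Euc d)) := by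
    have h1' : ∑ i : (↑(σ.erase p) : Set (Euc d)), (ν i - μ i) / a = 1 := by
      rw [← hw1]; exact Finset.sum_coe_sort (σ.erase p) (fun r => (ν r - μ r) / a)
    have hmem := affineCombination_mem_affineSpan (k := ℝ) (s := Finset.univ) h1'
      (fun q : (↑(σ.erase p) : Set (Euc d)) => (q : Euc d))
    rw [Finset.affineCombination_eq_linear_combination _ _ _ h1'] at hmem
    have heq : ∑ i : (↑(σ.erase p) : Set (Euc d)), ((ν i - μ i) / a) • (i : Euc d) = w :=
      Finset.sum_coe_sort (σ.erase p) (fun r => ((ν r - μ r) / a) • r)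
    rw [heq] at hmem
    rwa [Subtype.range_coe] at hmem
  -- y - z = a • (p - w)
  have hyz : y - z = a • (p - w) := by
    have h1 : y - z = ∑ r ∈ σ, (μ r - ν r) • r := by
      rw [hμy, hνz, ← Finset.sum_sub_distrib]
      exact Finset.sum_congr rfl (fun r _ => (sub_smul _ _ _).symm)
    have h2 : ∑ r ∈ σ, (μ r - ν r) • r
        = (∑ r ∈ σ.erase p, (μ r - ν r) • r) + a • p := by
      exact (Finset.sum_erase_add σ _ hp).symm
    have h3 : a • w = ∑ r ∈ σ.erase p, (ν r - μ r) • r := by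
      rw [hw, Finset.smul_sum]
      exact Finset.sum_congr rfl (fun r _ => by
        rw [smul_smul, mul_div_cancel₀ _ ha0])
    have h5 : ∑ r ∈ σ.erase p, (μ r - ν r) • r + ∑ r ∈ σ.erase p, (ν r - μ r) • r = 0 := by
      rw [← Finset.sum_add_distrib]
      apply Finset.sum_eq_zero
      intro r _
      rw [← add_smul, show (μ r - ν r) + (ν r - μ r) = 0 by ring, zero_smul]
    rw [h1, h2, smul_sub, h3, eq_sub_iff_add_eq, add_right_comm, h5, zero_add]
  have hdyz : dist y z = |a| * dist p w := by
    rw [dist_eq_norm, hyz, norm_smul, Real.norm_eq_abs, dist_eq_norm]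
  rw [hdyz]
  have h4 : Metric.infDist p (affineSpan ℝ (↑(σ.erase p) : Set (Euc d)) : Set (Euc d))
      ≤ dist p w := Metric.infDist_le_dist_of_mem hwmem
  have : cM ≤ dist p w := le_trans hdist h4
  calc cM * |a| ≤ dist p w * |a| := by
        apply mul_le_mul_of_nonneg_right this (abs_nonneg _)
    _ = |a| * dist p w := mul_comm _ _
lemma finite_separated_inter {M : ℝ} (hM : 0 < M) {P : Set (Euc d)}
    (hsep : IsSeparatedSet M P) (y : Euc d) (ρ : ℝ) :
    (P ∩ Metric.closedBall y ρ).Finite := by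
  obtain ⟨t, -, htfin, hcov⟩ := finite_cover_balls_of_compact
    (isCompact_closedBall y ρ) (show 0 < M / 3 by linarith)
  set g : Euc d → Euc d := fun p =>
    if h : ∃ x ∈ t, p ∈ Metric.ball x (M / 3) then h.choose else p with hg
  have hgmem : ∀ p ∈ P ∩ Metric.closedBall y ρ,
      g p ∈ t ∧ p ∈ Metric.ball (g p) (M / 3) := by
    intro p hp
    have : ∃ x ∈ t, p ∈ Metric.ball x (M / 3) := by
      have := hcov hp.2
      simpa using this
    rw [hg]
    simp only [dif_pos this]
    exact ⟨this.choose_spec.1, this.choose_spec.2⟩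
  apply Set.Finite.of_finite_image (f := g) (Set.Finite.subset htfin ?_) ?_
  · rintro x ⟨p, hp, rfl⟩
    exact (hgmem p hp).1
  · intro p hp p' hp' hpp'
    by_contra hne
    have h1 := (hgmem p hp).2
    have h2 := (hgmem p' hp').2
    rw [hpp'] at h1
    have : dist p p' < M := by
      have := dist_triangle p (g p') p'
      rw [Metric.mem_ball] at h1 h2
      rw [dist_comm (g p') p'] at this
      linarith [h1, h2, this]
    exact absurd (hsep p hp.1 p' hp'.1 hne) (not_le.2 this)

lemma finite_near_simplices {M c : ℝ} (hM : 0 < M) {P : Set (Euc d)}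
    {𝒟 : Set (Finset (Euc d))} (hS : Standing M c P 𝒟) (a : Euc d) :
    {σ | σ ∈ 𝒟 ∧ (convexHull ℝ (↑σ : Set (Euc d)) ∩ Metric.closedBall a 1).Nonempty}.Finite := by
  obtain ⟨hsep, -, hcard, -, -, -, -, hball, -⟩ := hS
  have hQ : (P ∩ Metric.closedBall a (1 + 2 * (Real.sqrt 5 * M))).Finite :=
    finite_separated_inter hM hsep a _
  set Q' : Finset (Euc d) := hQ.toFinset with hQ'
  apply Set.Finite.subset (Q'.powerset.finite_toSet)
  rintro σ ⟨hσ, w, hw1, hw2⟩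
  simp only [Finset.coe_powerset, Set.mem_preimage, Set.mem_powerset_iff, Finset.mem_coe,
    Finset.mem_powerset]
  intro v hv
  rw [Finset.mem_coe, Set.Finite.mem_toFinset]
  obtain ⟨z, r, hr, hzr⟩ := hball σ hσ
  have hconv : convexHull ℝ (↑σ : Set (Euc d)) ⊆ Metric.closedBall z r :=
    convexHull_min hzr (convex_closedBall z r)
  have hwz : dist w z ≤ r := hconv hw1
  have hvz : dist (v : Euc d) z ≤ r := hzr hv
  have hwa : dist w a ≤ 1 := hw2
  constructor
  · exact (hcard σ hσ).2.1 hv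
  · rw [Metric.mem_closedBall]
    have h5 : 0 ≤ Real.sqrt 5 * M := by positivity
    calc dist (v : Euc d) a ≤ dist (v : Euc d) z + dist z w + dist w a := dist_triangle4 _ _ _ _
      _ ≤ r + r + 1 := by rw [dist_comm z w]; linarith
      _ ≤ 1 + 2 * (Real.sqrt 5 * M) := by linarith

lemma segment_in_simplex {M c : ℝ} (hM : 0 < M) {P : Set (Euc d)}
    {𝒟 : Set (Finset (Euc d))} (hS : Standing M c P 𝒟) (a b : Euc d) :
    ∃ s ∈ Set.Ioc (0:ℝ) 1, ∃ σ ∈ 𝒟, ∀ r ∈ Set.Icc (0:ℝ) s,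
      AffineMap.lineMap a b r ∈ convexHull ℝ (↑σ : Set (Euc d)) := by
  have hcov := hS.2.2.2.1
  set D : ℝ := dist a b with hD
  have hD0 : 0 ≤ D := dist_nonneg
  set u₀ : ℝ := min 1 (1 / (D + 1)) with hu₀
  have hu₀pos : 0 < u₀ := lt_min one_pos (by positivity)
  have hu₀le : u₀ ≤ 1 := min_le_left _ _
  have hmem_ball : ∀ r ∈ Set.Icc (0:ℝ) u₀, AffineMap.lineMap a b r ∈ Metric.closedBall a 1 := by
    intro r hr
    rw [Metric.mem_closedBall]
    have : AffineMap.lineMap a b r = AffineMap.lineMap a b r := rfl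
    have h1 : dist (AffineMap.lineMap a b r) (AffineMap.lineMap a b (0:ℝ)) = dist r 0 * D := by
      rw [dist_lineMap_lineMap]
    rw [show AffineMap.lineMap a b (0:ℝ) = a from AffineMap.lineMap_apply_zero a b] at h1
    rw [h1, Real.dist_eq, sub_zero, abs_of_nonneg hr.1]
    have hrle : r ≤ 1 / (D + 1) := le_trans hr.2 (min_le_right _ _)
    calc r * D ≤ (1 / (D + 1)) * D :=
          mul_le_mul_of_nonneg_right hrle hD0
      _ ≤ 1 := by rw [div_mul_eq_mul_div, div_le_one (by linarith)]; linarith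
  set 𝒟' := {σ | σ ∈ 𝒟 ∧ (convexHull ℝ (↑σ : Set (Euc d)) ∩ Metric.closedBall a 1).Nonempty}
    with h𝒟'
  have h𝒟'fin : 𝒟'.Finite := finite_near_simplices hM hS a
  set I : Finset (Euc d) → Set ℝ :=
    fun σ => {r : ℝ | AffineMap.lineMap a b r ∈ convexHull ℝ (↑σ : Set (Euc d))} with hI
  have hIconvex : ∀ σ, Convex ℝ (I σ) :=
    fun σ => (convex_convexHull ℝ _).affine_preimage (AffineMap.lineMap a b)
  have hIclosed : ∀ σ : Finset (Euc d), IsClosed (I σ) := by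
    intro σ
    have : Continuous (AffineMap.lineMap a b : ℝ →ᵃ[ℝ] Euc d) := AffineMap.lineMap_continuous
    exact IsClosed.preimage this ((σ.finite_toSet).isClosed_convexHull (𝕜 := ℝ))
  have hsub : Set.Ioc 0 u₀ ⊆ ⋃ σ ∈ 𝒟', I σ ∩ Set.Ioc 0 u₀ := by
    intro r hr
    have hmem : AffineMap.lineMap a b r ∈ ⋃ τ ∈ 𝒟, convexHull ℝ (↑τ : Set (Euc d)) := by
      rw [hcov]; trivial
    obtain ⟨σ, hσ, hmemσ⟩ := Set.mem_iUnion₂.1 hmem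
    have hball : AffineMap.lineMap a b r ∈ Metric.closedBall a 1 :=
      hmem_ball r ⟨le_of_lt hr.1, hr.2⟩
    exact Set.mem_iUnion₂.2 ⟨σ, ⟨hσ, ⟨_, hmemσ, hball⟩⟩, ⟨hmemσ, hr⟩⟩
  have h0cl : (0:ℝ) ∈ closure (Set.Ioc (0:ℝ) u₀) := by
    rw [closure_Ioc (ne_of_lt hu₀pos)]
    exact ⟨le_refl 0, le_of_lt hu₀pos⟩
  have h0cl' : (0:ℝ) ∈ ⋃ σ ∈ 𝒟', closure (I σ ∩ Set.Ioc 0 u₀) := by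
    rw [← Set.Finite.closure_biUnion h𝒟'fin]
    exact closure_mono hsub h0cl
  obtain ⟨σ, hσ𝒟', h0σ⟩ := Set.mem_iUnion₂.1 h0cl'
  have hne : (I σ ∩ Set.Ioc 0 u₀).Nonempty := by
    by_contra hempty
    rw [Set.not_nonempty_iff_eq_empty] at hempty
    rw [hempty, closure_empty] at h0σ
    exact h0σ
  obtain ⟨s, hsI, hsIoc⟩ := hne
  have h0I : (0:ℝ) ∈ I σ := by
    have : closure (I σ ∩ Set.Ioc 0 u₀) ⊆ closure (I σ) := closure_mono Set.inter_subset_left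
    have := this h0σ
    rwa [(hIclosed σ).closure_eq] at this
  refine ⟨s, ⟨hsIoc.1, le_trans hsIoc.2 hu₀le⟩, σ, hσ𝒟'.1, ?_⟩
  intro r hr
  have : r ∈ I σ := (hIconvex σ).ordConnected.out h0I hsI hr
  exact this


lemma propagation {M c : ℝ} (hM : 0 < M) (hc : 0 < c) {P : Set (Euc d)}
    {𝒟 : Set (Finset (Euc d))} (hS : Standing M c P 𝒟) {p : Euc d}
    {σ₀ : Finset (Euc d)} (hσ₀ : σ₀ ∈ 𝒟) (hpσ₀ : p ∈ σ₀) {x q : Euc d}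
    (hx : x ∈ Tcell σ₀ p) (hq : dist q x < c * M / (d + 1)) :
    ∃ σ ∈ 𝒟, p ∈ σ ∧ ∃ μ : Euc d → ℝ, (∀ r ∈ σ, 0 ≤ μ r) ∧ ∑ r ∈ σ, μ r = 1 ∧
      q = ∑ r ∈ σ, μ r • r ∧ 0 < μ p := by
  obtain ⟨lam₀, hl0, hl1, hlmax, hlx⟩ := hx
  have hind : ∀ τ ∈ 𝒟, AffineIndependent ℝ (fun q : (↑τ : Set (Euc d)) => (q : Euc d)) :=
    fun τ h => (hS.2.2.1 τ h).2.2
  have hcards : ∀ τ ∈ 𝒟, τ.card = d + 1 := fun τ h => (hS.2.2.1 τ h).1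
  have hcov := hS.2.2.2.1
  have hface := hS.2.2.2.2.2.1
  have hdistv := hS.2.2.2.2.2.2.2.2
  have hcM : (0:ℝ) < c * M := mul_pos hc hM
  have hd1 : (0:ℝ) < (d:ℝ) + 1 := by positivity
  -- the coordinate value predicate
  set val : Euc d → ℝ → Prop := fun y v => ∃ σ ∈ 𝒟, y ∈ convexHull ℝ (↑σ : Set (Euc d)) ∧
    ((p ∈ σ ∧ ∃ μ : Euc d → ℝ, (∀ r ∈ σ, 0 ≤ μ r) ∧ ∑ r ∈ σ, μ r = 1 ∧
      y = ∑ r ∈ σ, μ r • r ∧ μ p = v) ∨ (p ∉ σ ∧ v = 0)) with hval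
  have val_exists : ∀ y : Euc d, ∃ v, val y v := by
    intro y
    have hmem : y ∈ ⋃ τ ∈ 𝒟, convexHull ℝ (↑τ : Set (Euc d)) := by rw [hcov]; trivial
    obtain ⟨σ, hσ, hyσ⟩ := Set.mem_iUnion₂.1 hmem
    by_cases hp : p ∈ σ
    · obtain ⟨μ, h0, h1, hy⟩ := exists_rep_of_mem_convexHull hyσ
      exact ⟨μ p, σ, hσ, hyσ, Or.inl ⟨hp, μ, h0, h1, hy, rfl⟩⟩
    · exact ⟨0, σ, hσ, hyσ, Or.inr ⟨hp, rfl⟩⟩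
  have val_unique : ∀ y v v', val y v → val y v' → v = v' := by
    intro y v v' ⟨σ, hσ, hyσ, hbr⟩ ⟨σ', hσ', hyσ', hbr'⟩
    obtain ⟨μ', h0', h1', hy'⟩ := exists_rep_of_mem_convexHull hyσ'
    obtain ⟨μ, h0, h1, hy⟩ := exists_rep_of_mem_convexHull hyσ
    have hcomp := rep_compat hind hface hσ hσ' h0 h1 hy h0' h1' hy'
    have hcomp' := rep_compat hind hface hσ' hσ h0' h1' hy' h0 h1 hy
    rcases hbr with ⟨hp, ν, hν0, hν1, hνy, hνp⟩ | ⟨hp, hv⟩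
    · have hμν : ν p = μ p := by
        have := rep_compat hind hface hσ hσ hν0 hν1 hνy h0 h1 hy p hp
        rwa [if_pos hp] at this
      rcases hbr' with ⟨hp', ν', hν'0, hν'1, hν'y, hν'p⟩ | ⟨hp', hv'⟩
      · have hμν' : ν' p = μ' p := by
          have := rep_compat hind hface hσ' hσ' hν'0 hν'1 hν'y h0' h1' hy' p hp'
          rwa [if_pos hp'] at this
        have := hcomp p hp
        rw [if_pos hp'] at this
        rw [← hνp, ← hν'p, hμν, hμν', this]
      · have := hcomp p hp
        rw [if_neg hp'] at this
        rw [← hνp, hμν, this, hv']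
    · rcases hbr' with ⟨hp', ν', hν'0, hν'1, hν'y, hν'p⟩ | ⟨hp', hv'⟩
      · have hμν' : ν' p = μ' p := by
          have := rep_compat hind hface hσ' hσ' hν'0 hν'1 hν'y h0' h1' hy' p hp'
          rwa [if_pos hp'] at this
        have := hcomp' p hp'
        rw [if_neg hp] at this
        rw [← hν'p, hμν', this, hv]
      · rw [hv, hv']
  set F : Euc d → ℝ := fun y => Classical.choose (val_exists y) with hF
  have Fspec : ∀ y, val y (F y) := fun y => Classical.choose_spec (val_exists y)
  have F_eq : ∀ {y : Euc d} {v : ℝ}, val y v → F y = v :=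
    fun {y v} h => val_unique y (F y) v (Fspec y) h
  -- Lipschitz bound within one simplex
  have hlip : ∀ σ ∈ 𝒟, ∀ y z : Euc d, y ∈ convexHull ℝ (↑σ : Set (Euc d)) →
      z ∈ convexHull ℝ (↑σ : Set (Euc d)) → c * M * (F y - F z) ≤ dist y z := by
    intro σ hσ y z hy hz
    by_cases hp : p ∈ σ
    · obtain ⟨μ, h0, h1, hyr⟩ := exists_rep_of_mem_convexHull hy
      obtain ⟨ν, k0, k1, hzr⟩ := exists_rep_of_mem_convexHull hz
      have hFy : F y = μ p := F_eq ⟨σ, hσ, hy, Or.inl ⟨hp, μ, h0, h1, hyr, rfl⟩⟩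
      have hFz : F z = ν p := F_eq ⟨σ, hσ, hz, Or.inl ⟨hp, ν, k0, k1, hzr, rfl⟩⟩
      rw [hFy, hFz]
      have h2 := coord_lipschitz hp (le_of_lt hcM) (le_of_lt (hdistv σ hσ p hp)) h1 k1 hyr hzr
      calc c * M * (μ p - ν p) ≤ c * M * |μ p - ν p| :=
            mul_le_mul_of_nonneg_left (le_abs_self _) (le_of_lt hcM)
        _ ≤ dist y z := h2
    · have hFy : F y = 0 := F_eq ⟨σ, hσ, hy, Or.inr ⟨hp, rfl⟩⟩
      have hFz : F z = 0 := F_eq ⟨σ, hσ, hz, Or.inr ⟨hp, rfl⟩⟩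
      rw [hFy, hFz]
      simp [dist_nonneg]
  -- value at x
  have hxconv : x ∈ convexHull ℝ (↑σ₀ : Set (Euc d)) := hlx ▸ rep_mem_convexHull hl0 hl1
  have hFx : F x = lam₀ p := F_eq ⟨σ₀, hσ₀, hxconv, Or.inl ⟨hpσ₀, lam₀, hl0, hl1, hlx, rfl⟩⟩
  have hlam₀ : 1 ≤ ((d:ℝ) + 1) * lam₀ p := by
    have h1 : ∑ r ∈ σ₀, lam₀ r ≤ σ₀.card • lam₀ p :=
      Finset.sum_le_card_nsmul σ₀ lam₀ (lam₀ p) (fun r hr => hlmax r hr)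
    rw [hl1, hcards σ₀ hσ₀, nsmul_eq_mul] at h1
    push_cast at h1
    linarith
  -- the segment argument
  set D : ℝ := dist x q with hD
  have hD0 : 0 ≤ D := dist_nonneg
  set γ : ℝ → Euc d := fun t => AffineMap.lineMap x q t with hγ
  have hγ0 : γ 0 = x := AffineMap.lineMap_apply_zero x q
  have hγ1 : γ 1 = q := AffineMap.lineMap_apply_one x q
  have hγdist : ∀ s t : ℝ, dist (γ s) (γ t) = |s - t| * D := by
    intro s t
    rw [hγ]
    simp only []
    rw [dist_lineMap_lineMap, Real.dist_eq]
  have hrepar1 : ∀ t r : ℝ, AffineMap.lineMap (γ t) q r = γ (t + r * (1 - t)) := by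
    intro t r
    simp only [hγ, AffineMap.lineMap_apply, vsub_eq_sub, vadd_eq_add]
    module
  have hrepar2 : ∀ t r : ℝ, AffineMap.lineMap (γ t) x r = γ (t - r * t) := by
    intro t r
    simp only [hγ, AffineMap.lineMap_apply, vsub_eq_sub, vadd_eq_add]
    module
  set S : Set ℝ := {t | t ∈ Set.Icc (0:ℝ) 1 ∧ c * M * (F x - F (γ t)) ≤ t * D} with hSdef
  have h0S : (0:ℝ) ∈ S := by
    refine ⟨⟨le_refl 0, zero_le_one⟩, ?_⟩
    rw [hγ0]
    simp
  have hbdd : BddAbove S := ⟨1, fun t ht => ht.1.2⟩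
  have hSne : S.Nonempty := ⟨0, h0S⟩
  set T : ℝ := sSup S with hT
  have hT1 : T ≤ 1 := csSup_le hSne (fun t ht => ht.1.2)
  have hT0 : 0 ≤ T := le_csSup hbdd h0S
  have hTS : T ∈ S := by
    rcases eq_or_lt_of_le hT0 with h | hTpos
    · rw [← h]; exact h0S
    obtain ⟨s', hs'Ioc, σ, hσ, hseg⟩ := segment_in_simplex hM hS (γ T) x
    obtain ⟨s, hsS, hslt⟩ := exists_lt_of_lt_csSup hSne
      (show T - s' * T < T by
        have := mul_pos hs'Ioc.1 hTpos
        linarith)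
    have hsle : s ≤ T := le_csSup hbdd hsS
    have hTne : T ≠ 0 := ne_of_gt hTpos
    set r : ℝ := (T - s) / T with hr
    have hr0 : 0 ≤ r := div_nonneg (by linarith) (le_of_lt hTpos)
    have hrs' : r ≤ s' := by
      rw [hr, div_le_iff₀ hTpos]
      linarith
    have hrT : T - r * T = s := by
      rw [hr]; field_simp; ring
    have hmem1 : γ s ∈ convexHull ℝ (↑σ : Set (Euc d)) := by
      have := hseg r ⟨hr0, hrs'⟩
      rwa [hrepar2, hrT] at this
    have hmem2 : γ T ∈ convexHull ℝ (↑σ : Set (Euc d)) := by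
      have := hseg 0 ⟨le_refl 0, le_of_lt hs'Ioc.1⟩
      rwa [AffineMap.lineMap_apply_zero] at this
    have hlipapp := hlip σ hσ (γ s) (γ T) hmem1 hmem2
    rw [hγdist s T, abs_of_nonpos (by linarith), neg_sub] at hlipapp
    have hest := hsS.2
    refine ⟨⟨hT0, hT1⟩, ?_⟩
    have e1 : c * M * (F x - F (γ T))
        = c * M * (F x - F (γ s)) + c * M * (F (γ s) - F (γ T)) := by ring
    have e2 : s * D + (T - s) * D = T * D := by ring
    linarith
  have h1S : (1:ℝ) ∈ S := by
    rcases lt_or_eq_of_le hT1 with hTlt | hTeq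
    · exfalso
      obtain ⟨s', hs'Ioc, σ, hσ, hseg⟩ := segment_in_simplex hM hS (γ T) q
      set t' : ℝ := T + s' * (1 - T) with ht'
      have ht'T : T < t' := by
        have := mul_pos hs'Ioc.1 (show (0:ℝ) < 1 - T by linarith)
        rw [ht']
        linarith
      have ht'le : t' ≤ 1 := by
        have h1 : s' * (1 - T) ≤ 1 - T :=
          mul_le_of_le_one_left (by linarith) hs'Ioc.2
        rw [ht']
        linarith
      have hmem2 : γ T ∈ convexHull ℝ (↑σ : Set (Euc d)) := by
        have := hseg 0 ⟨le_refl 0, le_of_lt hs'Ioc.1⟩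
        rwa [AffineMap.lineMap_apply_zero] at this
      have hmem1 : γ t' ∈ convexHull ℝ (↑σ : Set (Euc d)) := by
        have := hseg s' ⟨le_of_lt hs'Ioc.1, le_refl s'⟩
        rwa [hrepar1] at this
      have hlipapp := hlip σ hσ (γ T) (γ t') hmem2 hmem1
      rw [hγdist T t', abs_of_nonpos (by linarith), neg_sub] at hlipapp
      have hest := hTS.2
      have ht'S : t' ∈ S := by
        refine ⟨⟨by linarith, ht'le⟩, ?_⟩
        have e1 : c * M * (F x - F (γ t'))
            = c * M * (F x - F (γ T)) + c * M * (F (γ T) - F (γ t')) := by ring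
        have e2 : T * D + (t' - T) * D = t' * D := by ring
        linarith
      have := le_csSup hbdd ht'S
      linarith
    · rw [hTeq] at hTS
      exact hTS
  -- conclude
  have hkey : c * M * (F x - F q) ≤ D := by
    have := h1S.2
    rwa [hγ1, one_mul] at this
  have hDlt : D < c * M / ((d:ℝ) + 1) := by rw [hD, dist_comm]; exact_mod_cast hq
  have hFqpos : 0 < F q := by
    rw [hFx] at hkey
    have h1 : c * M * (lam₀ p - F q) < c * M / ((d:ℝ) + 1) := lt_of_le_of_lt hkey hDlt
    by_contra hle
    push_neg at hle
    have h3 : ((d:ℝ) + 1) * (c * M * (lam₀ p - F q)) < ((d:ℝ)+1) * (c * M / ((d:ℝ) + 1)) :=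
      mul_lt_mul_of_pos_left h1 hd1
    have h4 : ((d:ℝ) + 1) * (c * M / ((d:ℝ) + 1)) = c * M := by field_simp
    have h5 : c * M * 1 ≤ c * M * (((d:ℝ) + 1) * lam₀ p) :=
      mul_le_mul_of_nonneg_left hlam₀ hcM.le
    have h6 : 0 ≤ ((d:ℝ) + 1) * (c * M) * (- F q) :=
      mul_nonneg (mul_nonneg hd1.le hcM.le) (by linarith)
    nlinarith [h3, h4, h5, h6]
  obtain ⟨σ, hσ, hqσ, hbr⟩ := Fspec q
  rcases hbr with ⟨hp, μ, h0, h1, hy, hμp⟩ | ⟨hp, hv⟩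
  · exact ⟨σ, hσ, hp, μ, h0, h1, hy, hμp ▸ hFqpos⟩
  · rw [hv] at hFqpos; exact absurd hFqpos (lt_irrefl 0)

/-- Under the standing assumptions, the tessellation `{T(p) : p ∈ P}` is
`cM/(d+1)`-separated: (a) if finitely many distinct cells all come within distance
`cM/(d+1)` of a common point, they have a common point; (b) any `d+2` distinct
cells have empty intersection. -/
theorem stmt15 (hd : 1 ≤ d) (M c : ℝ) (hM : 0 < M) (hc : 0 < c)
    (P : Set (EuclideanSpace ℝ (Fin d))) (𝒟 : Set (Finset (EuclideanSpace ℝ (Fin d))))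
    (hS : Standing M c P 𝒟) :
    (∀ (n : ℕ) (ps : Fin (n + 1) → EuclideanSpace ℝ (Fin d)),
      Function.Injective ps → (∀ i, ps i ∈ P) →
      ∀ q : EuclideanSpace ℝ (Fin d),
        (∀ i, Metric.infDist q (Tset 𝒟 (ps i)) < c * M / (d + 1)) →
        (⋂ i, Tset 𝒟 (ps i)).Nonempty) ∧
    (∀ ps : Fin (d + 2) → EuclideanSpace ℝ (Fin d),
      Function.Injective ps → (∀ i, ps i ∈ P) →
      (⋂ i, Tset 𝒟 (ps i)) = ∅) := by
  have hind : ∀ τ ∈ 𝒟, AffineIndependent ℝ (fun q : (↑τ : Set (EuclideanSpace ℝ (Fin d))) =>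
      (q : EuclideanSpace ℝ (Fin d))) := fun τ h => (hS.2.2.1 τ h).2.2
  have hcards : ∀ τ ∈ 𝒟, τ.card = d + 1 := fun τ h => (hS.2.2.1 τ h).1
  have hcov := hS.2.2.2.1
  have hface := hS.2.2.2.2.2.1
  have hin := hS.2.2.2.2.2.2.1
  constructor
  · -- part (a)
    intro n ps hinj hPs q hq
    have hkey : ∀ i, ∃ σ ∈ 𝒟, ps i ∈ σ ∧ ∃ μ : EuclideanSpace ℝ (Fin d) → ℝ,
        (∀ r ∈ σ, 0 ≤ μ r) ∧ ∑ r ∈ σ, μ r = 1 ∧ q = ∑ r ∈ σ, μ r • r ∧ 0 < μ (ps i) := by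
      intro i
      obtain ⟨τ, hτ, hpτ⟩ := hin (ps i) (hPs i)
      have hcellmem : ps i ∈ Tcell τ (ps i) := by
        refine ⟨fun r => if r = ps i then 1 else 0, ?_, ?_, ?_, ?_⟩
        · intro r _; by_cases h : r = ps i <;> simp [h]
        · show (∑ r ∈ τ, if r = ps i then (1:ℝ) else 0) = 1
          rw [Finset.sum_ite_eq' τ (ps i) (fun _ => (1:ℝ)), if_pos hpτ]
        · intro r _; by_cases h : r = ps i <;> simp [h]
        · show ps i = ∑ r ∈ τ, (if r = ps i then (1:ℝ) else 0) • r
          have hcg : ∀ r ∈ τ, (if r = ps i then (1:ℝ) else 0) • r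
              = if r = ps i then r else 0 := by
            intro r _; by_cases h : r = ps i <;> simp [h]
          rw [Finset.sum_congr rfl hcg, Finset.sum_ite_eq' τ (ps i) (fun r => r), if_pos hpτ]
      have hTne : (Tset 𝒟 (ps i)).Nonempty :=
        ⟨ps i, Set.mem_iUnion₂.2 ⟨τ, ⟨hτ, hpτ⟩, hcellmem⟩⟩
      obtain ⟨x, hxT, hdx⟩ := (Metric.infDist_lt_iff hTne).1 (hq i)
      obtain ⟨σ₀, hσ₀mem, hxcell⟩ := Set.mem_iUnion₂.1 hxT
      exact propagation hM hc hS hσ₀mem.1 hσ₀mem.2 hxcell (by exact_mod_cast hdx)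
    choose σ hσ hpσ μ hμ0 hμ1 hμq hμpos using hkey
    have hqcov : q ∈ ⋃ τ ∈ 𝒟, convexHull ℝ (↑τ : Set (EuclideanSpace ℝ (Fin d))) := by
      rw [hcov]; trivial
    obtain ⟨τs, hτs, hqτs⟩ := Set.mem_iUnion₂.1 hqcov
    obtain ⟨κ, hκ0, hκ1, hκq⟩ := exists_rep_of_mem_convexHull hqτs
    have hin' : ∀ i, ps i ∈ τs := by
      intro i
      have hcomp := rep_compat hind hface (hσ i) hτs (hμ0 i) (hμ1 i) (hμq i)
        hκ0 hκ1 hκq (ps i) (hpσ i)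
      by_contra hni
      rw [if_neg hni] at hcomp
      exact absurd (hcomp ▸ hμpos i) (lt_irrefl 0)
    refine ⟨∑ r ∈ τs, (((d:ℝ)+1)⁻¹) • r, Set.mem_iInter.2 ?_⟩
    intro i
    refine Set.mem_iUnion₂.2 ⟨τs, ⟨hτs, hin' i⟩, ?_⟩
    refine ⟨fun _ => ((d:ℝ)+1)⁻¹, fun r _ => by positivity, ?_, fun r _ => le_refl _, rfl⟩
    rw [Finset.sum_const, hcards τs hτs, nsmul_eq_mul]
    push_cast
    field_simp
  · -- part (b)
    intro ps hinj hPs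
    rw [Set.eq_empty_iff_forall_notMem]
    intro x hx
    have hx' := Set.mem_iInter.1 hx
    have hmem : ∀ i, ∃ τ ∈ 𝒟, ps i ∈ τ ∧ x ∈ Tcell τ (ps i) := by
      intro i
      obtain ⟨τ, hτm, hcell⟩ := Set.mem_iUnion₂.1 (hx' i)
      exact ⟨τ, hτm.1, hτm.2, hcell⟩
    choose τ hτ hpτ hcell using hmem
    have hrep : ∀ i, ∃ lam : EuclideanSpace ℝ (Fin d) → ℝ, (∀ r ∈ τ i, 0 ≤ lam r) ∧
        ∑ r ∈ τ i, lam r = 1 ∧ x = ∑ r ∈ τ i, lam r • r ∧ 0 < lam (ps i) := by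
      intro i
      obtain ⟨lam, h0, h1, hmax, hxl⟩ := hcell i
      refine ⟨lam, h0, h1, hxl, ?_⟩
      by_contra hnp
      push_neg at hnp
      have hsum : ∑ r ∈ τ i, lam r ≤ 0 :=
        Finset.sum_nonpos (fun r hr => le_trans (hmax r hr) hnp)
      rw [h1] at hsum
      linarith
    choose lam hl0 hl1 hlx hlpos using hrep
    have hin0 : ∀ i, ps i ∈ τ 0 := by
      intro i
      have hcomp := rep_compat hind hface (hτ i) (hτ 0) (hl0 i) (hl1 i) (hlx i)
        (hl0 0) (hl1 0) (hlx 0) (ps i) (hpτ i)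
      by_contra hni
      rw [if_neg hni] at hcomp
      exact absurd (hcomp ▸ hlpos i) (lt_irrefl 0)
    have hle : Finset.univ.card ≤ (τ 0).card :=
      Finset.card_le_card_of_injOn ps (fun i _ => hin0 i) (fun a _ b _ h => hinj h)
    rw [Finset.card_univ, Fintype.card_fin, hcards _ (hτ 0)] at hle
    omega
end
end

section
/- Let K be a finite group acting freely by homeomorphisms on a Cantor set X. Then there exists a clopen subset E ⊆ X such that the sets k·E, for k ∈ K, are pairwise disjoint and their union is X. -/
noncomputable section

/-- Let `K` be a finite group acting freely by homeomorphisms on a Cantor set `X`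
(non-empty, compact, metrizable, totally disconnected, with no isolated points).
Then there is a clopen subset `E ⊆ X` such that the sets `k·E`, `k ∈ K`, are
pairwise disjoint and cover `X`. -/
theorem stmt17 {K X : Type*} [Group K] [Finite K]
    [TopologicalSpace X] [CompactSpace X] [TopologicalSpace.MetrizableSpace X]
    [TotallyDisconnectedSpace X] [Nonempty X]
    (hperf : Perfect (Set.univ : Set X))
    (act : K → X → X)
    (hone : ∀ x, act 1 x = x)
    (hmul : ∀ k k' x, act (k * k') x = act k (act k' x))
    (hcont : ∀ k, Continuous (act k))
    (hfree : ∀ k x, act k x = x → k = 1) :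
    ∃ E : Set X, IsClopen E ∧
      (∀ k k' : K, k ≠ k' → Disjoint (act k '' E) (act k' '' E)) ∧
      (⋃ k : K, act k '' E) = Set.univ := by
  classical
  cases nonempty_fintype K
  haveI : T2Space X := inferInstance
  have hinv : ∀ (k : K) (x : X), act k⁻¹ (act k x) = x := by
    intro k x; rw [← hmul, inv_mul_cancel, hone]
  have hinv' : ∀ (k : K) (x : X), act k (act k⁻¹ x) = x := by
    intro k x; rw [← hmul, mul_inv_cancel, hone]
  have himg : ∀ (k : K) (E : Set X), act k '' E = (act k⁻¹) ⁻¹' E := by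
    intro k E; ext y; constructor
    · rintro ⟨x, hx, rfl⟩; simpa [hinv] using hx
    · intro hy; exact ⟨act k⁻¹ y, hy, hinv' k y⟩
  have hclopen_img : ∀ (k : K) (E : Set X), IsClopen E → IsClopen (act k '' E) := by
    intro k E hE; rw [himg]; exact hE.preimage (hcont _)
  -- key local structure: clopen neighborhoods with pairwise disjoint translates
  have key : ∀ x : X, ∃ V : Set X, IsClopen V ∧ x ∈ V ∧
      ∀ k k' : K, k ≠ k' → Disjoint (act k '' V) (act k' '' V) := by
    intro x
    have sep : ∀ k : K, ∃ A B : Set X, IsOpen A ∧ IsOpen B ∧ x ∈ A ∧ act k x ∈ B ∧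
        (k ≠ 1 → Disjoint A B) := by
      intro k
      by_cases hk : k = 1
      · exact ⟨Set.univ, Set.univ, isOpen_univ, isOpen_univ, trivial, trivial,
          fun h => absurd hk h⟩
      · have hne : x ≠ act k x := fun h => hk (hfree k x h.symm)
        obtain ⟨A, B, hA, hB, hxA, hxB, hAB⟩ := t2_separation hne
        exact ⟨A, B, hA, hB, hxA, hxB, fun _ => hAB⟩
    choose A B hA hB hxA hxB hAB using sep
    set V0 : Set X := ⋂ k : K, (A k ∩ (act k) ⁻¹' (B k)) with hV0def
    have hV0open : IsOpen V0 :=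
      isOpen_iInter_of_finite fun k => (hA k).inter ((hB k).preimage (hcont k))
    have hxV0 : x ∈ V0 := Set.mem_iInter.2 fun k => ⟨hxA k, hxB k⟩
    have hV0 : ∀ g : K, g ≠ 1 → ∀ y ∈ V0, act g y ∉ V0 := by
      intro g hg y hy hgy
      have h1 : act g y ∈ A g := (Set.mem_iInter.1 hgy g).1
      have h2 : act g y ∈ B g := (Set.mem_iInter.1 hy g).2
      exact Set.disjoint_left.1 (hAB g hg) h1 h2
    obtain ⟨V, hVclopen, hxV, hVsub⟩ := compact_exists_isClopen_in_isOpen hV0open hxV0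
    refine ⟨V, hVclopen, hxV, fun k k' hkk' => Set.disjoint_left.2 ?_⟩
    rintro y ⟨a, ha, rfl⟩ ⟨b, hb, hba⟩
    have hab : a = act (k⁻¹ * k') b := by
      rw [hmul, hba, hinv]
    have hg : k⁻¹ * k' ≠ 1 := fun h => hkk' (inv_mul_eq_one.1 h)
    exact hV0 (k⁻¹ * k') hg b (hVsub hb) (hab ▸ hVsub ha)
  choose V hVclopen hxV hVdisj using key
  obtain ⟨t, -, htcov⟩ := isCompact_univ.elim_nhds_subcover V
    (fun x _ => (hVclopen x).2.mem_nhds (hxV x))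
  -- build a fundamental domain by induction on the finite subcover
  have ind : ∀ s : Finset X, ∃ E : Set X, IsClopen E ∧
      (∀ k k' : K, k ≠ k' → Disjoint (act k '' E) (act k' '' E)) ∧
      ∀ x ∈ s, V x ⊆ ⋃ k : K, act k '' E := by
    intro s
    induction s using Finset.induction with
    | empty => exact ⟨∅, isClopen_empty, by simp, by simp⟩
    | @insert a s ha ih =>
      obtain ⟨E, hE, hdisj, hcov⟩ := ih
      set C : Set X := ⋃ k : K, act k '' E with hCdef
      have hC : IsClopen C := isClopen_iUnion_of_finite fun k => hclopen_img k E hE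
      set N : Set X := V a \ C with hNdef
      have hNC : ∀ z ∈ N, z ∉ C := fun z hz => hz.2
      refine ⟨E ∪ N, hE.union ((hVclopen a).diff hC), ?_, ?_⟩
      · intro k k' hkk'
        rw [Set.image_union, Set.image_union]
        have mixed : ∀ g g' : K, Disjoint (act g '' E) (act g' '' N) := by
          intro g g'
          refine Set.disjoint_left.2 ?_
          rintro y ⟨e, he, rfl⟩ ⟨n, hn, hne⟩
          have : n = act (g'⁻¹ * g) e := by rw [hmul, ← hne, hinv]
          exact hNC n hn (this ▸ Set.mem_iUnion.2 ⟨g'⁻¹ * g, Set.mem_image_of_mem _ he⟩)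
        have hNN : Disjoint (act k '' N) (act k' '' N) :=
          (hVdisj a k k' hkk').mono (Set.image_mono Set.diff_subset)
            (Set.image_mono Set.diff_subset)
        exact Set.disjoint_union_left.2
          ⟨Set.disjoint_union_right.2 ⟨hdisj k k' hkk', mixed k k'⟩,
           Set.disjoint_union_right.2 ⟨(mixed k' k).symm, hNN⟩⟩
      · intro x hx z hz
        rcases Finset.mem_insert.1 hx with rfl | hxs
        · by_cases hzC : z ∈ C
          · obtain ⟨k, hk⟩ := Set.mem_iUnion.1 hzC
            exact Set.mem_iUnion.2 ⟨k, Set.image_mono Set.subset_union_left hk⟩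
          · refine Set.mem_iUnion.2 ⟨1, ⟨z, Or.inr ⟨hz, hzC⟩, hone z⟩⟩
        · obtain ⟨k, hk⟩ := Set.mem_iUnion.1 (hcov x hxs hz)
          exact Set.mem_iUnion.2 ⟨k, Set.image_mono Set.subset_union_left hk⟩
  obtain ⟨E, hE, hdisj, hcov⟩ := ind t
  refine ⟨E, hE, hdisj, Set.eq_univ_of_univ_subset ?_⟩
  intro z hz
  obtain ⟨x, hx⟩ := Set.mem_iUnion₂.1 (htcov hz)
  exact hcov x hx.1 hx.2
end
end

section
/- Let K be a finite group, let d ≥ 1, and let φ be a free action of the group K × ℤ^d by homeomorphisms on a Cantor set X. Then there exists a free action ψ of ℤ^d by homeomorphisms on X such that R_φ = R_ψ; that is, for every x ∈ X, {φ^g(x) : g ∈ K × ℤ^d} = {ψ^n(x) : n ∈ ℤ^d}. -/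
noncomputable section

open Set


theorem cantor_arith_mod (m : ℕ) (z b : ℤ) : (z % m + b) % m = (z + b) % m := by
  have h : z % m + b = (z + b) + (m:ℤ) * (-(z / m)) := by rw [Int.emod_def]; ring
  rw [h, Int.add_mul_emod_self_left]

theorem cantor_arith_div (m : ℕ) (hm : 0 < m) (z b : ℤ) :
    (z % m + b) / m = (z + b) / m - z / m := by
  have h : z % m + b = (z + b) + (m:ℤ) * (-(z / m)) := by rw [Int.emod_def]; ring
  have hm' : (m:ℤ) ≠ 0 := by exact_mod_cast hm.ne'
  rw [h, Int.add_mul_ediv_left _ _ hm']; ring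

def cantorI {K : Type*} {m : ℕ} (e : K ≃ Fin m) (k : K) : ℤ := ((e k : ℕ) : ℤ)

theorem cantorI_nonneg {K : Type*} {m : ℕ} (e : K ≃ Fin m) (k : K) : 0 ≤ cantorI e k :=
  Int.ofNat_nonneg _

theorem cantorI_lt {K : Type*} {m : ℕ} (e : K ≃ Fin m) (k : K) : cantorI e k < m := by
  unfold cantorI; exact_mod_cast (e k).isLt

theorem cantorR_aux {m : ℕ} (hm : 0 < m) (z : ℤ) : (z % m).toNat < m := by
  have h1 : 0 ≤ z % (m:ℤ) := Int.emod_nonneg z (by exact_mod_cast hm.ne')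
  have h2 : z % (m:ℤ) < m := Int.emod_lt_of_pos z (by exact_mod_cast hm)
  omega

def cantorR {K : Type*} {m : ℕ} (hm : 0 < m) (e : K ≃ Fin m) (z : ℤ) : K :=
  e.symm ⟨(z % m).toNat, cantorR_aux hm z⟩

theorem cantorI_R {K : Type*} {m : ℕ} (hm : 0 < m) (e : K ≃ Fin m) (z : ℤ) :
    cantorI e (cantorR hm e z) = z % m := by
  unfold cantorI cantorR
  rw [Equiv.apply_symm_apply]
  have h1 : 0 ≤ z % (m:ℤ) := Int.emod_nonneg z (by exact_mod_cast hm.ne')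
  simp only [Fin.val_mk]
  omega

theorem cantorR_I {K : Type*} {m : ℕ} (hm : 0 < m) (e : K ≃ Fin m) (k : K) :
    cantorR hm e (cantorI e k) = k := by
  unfold cantorR
  have h1 : cantorI e k % m = cantorI e k :=
    Int.emod_eq_of_lt (cantorI_nonneg e k) (cantorI_lt e k)
  have h2 : (cantorI e k % (m:ℤ)).toNat = (e k : ℕ) := by
    rw [h1]; unfold cantorI; omega
  have h3 : (⟨(cantorI e k % (m:ℤ)).toNat, cantorR_aux hm (cantorI e k)⟩ : Fin m) = e k :=
    Fin.ext h2
  rw [h3, Equiv.symm_apply_apply]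

theorem cantorR_congr {K : Type*} {m : ℕ} (hm : 0 < m) (e : K ≃ Fin m) {z z' : ℤ}
    (h : z % m = z' % m) : cantorR hm e z = cantorR hm e z' := by
  unfold cantorR
  exact congrArg e.symm (Fin.ext (by simp only [Fin.val_mk]; omega))

section Build

variable {K X : Type*} [Group K] {d : ℕ}

/-- the retraction onto the fundamental domain -/
def cantorP (φ : K × (Fin d → ℤ) → X → X) (c : X → K) (x : X) : X := φ ((c x)⁻¹, 0) x

/-- the induced `ℤ^d`-transfer map -/
def cantorTT (φ : K × (Fin d → ℤ) → X → X) (c : X → K) (w : Fin d → ℤ) (y : X) : X :=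
  cantorP φ c (φ (1, w) y)

/-- the new action -/
def cantorPsi {m : ℕ} (hm : 0 < m) (e : K ≃ Fin m) (φ : K × (Fin d → ℤ) → X → X)
    (c : X → K) (i0 : Fin d) (v : Fin d → ℤ) (x : X) : X :=
  φ (cantorR hm e (cantorI e (c x) + v i0), 0)
    (cantorTT φ c (Function.update v i0 ((cantorI e (c x) + v i0) / m)) (cantorP φ c x))

end Build

theorem cantor_piecewise_cont {K X Y : Type*} [TopologicalSpace X] [TopologicalSpace Y]
    (c : X → K) (hc : ∀ k, IsOpen {x | c x = k})
    (F : K → X → Y) (hF : ∀ k, Continuous (F k)) :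
    Continuous (fun x => F (c x) x) := by
  rw [continuous_def]
  intro O hO
  have h : (fun x => F (c x) x) ⁻¹' O = ⋃ k, ({x | c x = k} ∩ (F k) ⁻¹' O) := by
    ext x
    simp only [mem_preimage, mem_iUnion, mem_inter_iff, mem_setOf_eq]
    constructor
    · intro h; exact ⟨c x, rfl, h⟩
    · rintro ⟨k, rfl, h⟩; exact h
  rw [h]
  exact isOpen_iUnion fun k => (hc k).inter ((hF k).isOpen_preimage O hO)

theorem cantor_build {K X : Type*} [Group K] [Finite K] (d : ℕ) (hd : 1 ≤ d)
    [TopologicalSpace X]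
    (φ : K × (Fin d → ℤ) → X → X)
    (hone : ∀ x, φ (1, 0) x = x)
    (hmul : ∀ g h : K × (Fin d → ℤ), ∀ x, φ (g.1 * h.1, g.2 + h.2) x = φ g (φ h x))
    (hcont : ∀ g, Continuous (φ g))
    (hfree : ∀ g x, φ g x = x → g = (1, 0))
    (U : Set X) (hUcl : IsClopen U) (hUfd : ∀ x, ∃! k : K, φ (k, 0) x ∈ U) :
    ∃ ψ : (Fin d → ℤ) → X → X,
      (∀ x, ψ 0 x = x) ∧
      (∀ m n x, ψ (m + n) x = ψ m (ψ n x)) ∧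
      (∀ n, Continuous (ψ n)) ∧
      (∀ n x, ψ n x = x → n = 0) ∧
      ∀ x : X, {y | ∃ g, φ g x = y} = {y | ∃ n, ψ n x = y} := by
  classical
  have hcomp : ∀ (a b : K) (s t : Fin d → ℤ) (x : X),
      φ (a, s) (φ (b, t) x) = φ (a * b, s + t) x := fun a b s t x => (hmul (a,s) (b,t) x).symm
  have hm : 0 < Nat.card K := Nat.card_pos
  set e : K ≃ Fin (Nat.card K) := Finite.equivFin K with he
  set i0 : Fin d := ⟨0, hd⟩ with hi0
  -- the index map c
  have hUfd' : ∀ x : X, ∃ k : K, φ (k⁻¹, 0) x ∈ U ∧ ∀ k' : K, φ (k'⁻¹, 0) x ∈ U → k' = k := by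
    intro x
    obtain ⟨k, hk, hk'⟩ := hUfd x
    refine ⟨k⁻¹, by rw [inv_inv]; exact hk, fun k' h => ?_⟩
    have h2 : k'⁻¹ = k := hk' k'⁻¹ h
    rw [← h2, inv_inv]
  choose c hc1 hc2 using hUfd'
  have hKmul : ∀ (a b : K) (x : X), φ (a, 0) (φ (b, 0) x) = φ (a * b, 0) x := by
    intro a b x
    have h0 : (0 : Fin d → ℤ) + 0 = 0 := add_zero 0
    rw [hcomp, h0]
  have hc_cocycle : ∀ (a : K) (x : X), c (φ (a, 0) x) = a * c x := by
    intro a x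
    refine (hc2 (φ (a, 0) x) (a * c x) ?_).symm
    have h0 : φ ((a * c x)⁻¹, (0 : Fin d → ℤ)) (φ (a, 0) x) = φ ((c x)⁻¹, 0) x := by
      rw [hKmul]
      have hgr : (a * c x)⁻¹ * a = (c x)⁻¹ := by group
      rw [hgr]
    rw [h0]; exact hc1 x
  have hpU : ∀ x, cantorP φ c x ∈ U := fun x => hc1 x
  have hcU : ∀ x, x ∈ U → c x = 1 := by
    intro x hx
    refine (hc2 x 1 ?_).symm
    rw [inv_one, hone]; exact hx
  have hp_shift : ∀ (a : K) (x : X), cantorP φ c (φ (a, 0) x) = cantorP φ c x := by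
    intro a x
    simp only [cantorP, hc_cocycle, hKmul]
    have hgr : (a * c x)⁻¹ * a = (c x)⁻¹ := by group
    rw [hgr]
  have hcp : ∀ x, c (cantorP φ c x) = 1 := fun x => hcU _ (hpU x)
  have hpp : ∀ x, cantorP φ c (cantorP φ c x) = cantorP φ c x := by
    intro x
    calc cantorP φ c (cantorP φ c x)
        = φ ((c (cantorP φ c x))⁻¹, 0) (cantorP φ c x) := rfl
      _ = cantorP φ c x := by rw [hcp, inv_one, hone]
  have hfc : ∀ (a : K) (u : X), u ∈ U → c (φ (a, 0) u) = a := by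
    intro a u hu; rw [hc_cocycle, hcU u hu, mul_one]
  -- transfer maps
  have hTT0 : ∀ y, cantorTT φ c 0 y = cantorP φ c y := by
    intro y
    show cantorP φ c (φ (1, 0) y) = cantorP φ c y
    rw [hone]
  have hTTadd : ∀ (w w' : Fin d → ℤ) (y : X),
      cantorTT φ c w (cantorTT φ c w' y) = cantorTT φ c (w + w') y := by
    intro w w' y
    have hswap : ∀ (b : K) (z : X), φ (1, w) (φ (b, 0) z) = φ (b, 0) (φ (1, w) z) := by
      intro b z
      rw [hcomp, hcomp, one_mul, mul_one, add_zero, zero_add]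
    have step1 : φ (1, w) (φ ((c (φ (1, w') y))⁻¹, 0) (φ (1, w') y))
        = φ ((c (φ (1, w') y))⁻¹, 0) (φ (1, w) (φ (1, w') y)) := hswap _ _
    have step2 : φ (1, w) (φ (1, w') y) = φ (1, w + w') y := by
      rw [hcomp, one_mul]
    calc cantorTT φ c w (cantorTT φ c w' y)
        = cantorP φ c (φ (1, w) (φ ((c (φ (1, w') y))⁻¹, 0) (φ (1, w') y))) := rfl
      _ = cantorP φ c (φ ((c (φ (1, w') y))⁻¹, 0) (φ (1, w) (φ (1, w') y))) := by rw [step1]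
      _ = cantorP φ c (φ (1, w) (φ (1, w') y)) := hp_shift _ _
      _ = cantorTT φ c (w + w') y := by rw [step2]; rfl
  have hTTU : ∀ w y, cantorTT φ c w y ∈ U := fun w y => hpU _
  have hpTT : ∀ w y, cantorP φ c (cantorTT φ c w y) = cantorTT φ c w y := fun w y => hpp _
  -- normal form for ψ
  have hNF : ∀ (v : Fin d → ℤ) (x : X), cantorPsi hm e φ c i0 v x =
      φ (cantorR hm e (cantorI e (c x) + v i0), 0)
        (cantorTT φ c (Function.update v i0 ((cantorI e (c x) + v i0) / (Nat.card K : ℤ)))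
          (cantorP φ c x)) := fun v x => rfl
  have hcψ : ∀ v x, c (cantorPsi hm e φ c i0 v x)
      = cantorR hm e (cantorI e (c x) + v i0) := by
    intro v x
    rw [hNF]
    exact hfc _ _ (hTTU _ _)
  have hpψ : ∀ v x, cantorP φ c (cantorPsi hm e φ c i0 v x)
      = cantorTT φ c (Function.update v i0 ((cantorI e (c x) + v i0) / (Nat.card K : ℤ)))
        (cantorP φ c x) := by
    intro v x
    rw [hNF, hp_shift, hpTT]
  refine ⟨cantorPsi hm e φ c i0, ?_, ?_, ?_, ?_, ?_⟩
  · -- identity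
    intro x
    rw [hNF]
    have h1 : (0 : Fin d → ℤ) i0 = 0 := rfl
    have h2 : cantorI e (c x) + 0 = cantorI e (c x) := add_zero _
    have h3 : cantorI e (c x) / (Nat.card K : ℤ) = 0 :=
      Int.ediv_eq_zero_of_lt (cantorI_nonneg e _) (cantorI_lt e _)
    have h4 : Function.update (0 : Fin d → ℤ) i0 (0 : ℤ) = 0 := by
      funext j
      by_cases hj : j = i0
      · subst hj; simp
      · simp [Function.update_of_ne hj]
    rw [h1, h2, cantorR_I, h3, h4, hTT0, hpp]
    calc φ (c x, 0) (cantorP φ c x)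
        = φ (c x, 0) (φ ((c x)⁻¹, 0) x) := rfl
      _ = φ (c x * (c x)⁻¹, 0) x := hKmul _ _ _
      _ = x := by
          have hgr : c x * (c x)⁻¹ = 1 := by group
          rw [hgr, hone]
  · -- additivity
    intro v' v x
    have h1 := hcψ v x
    have h2 := hpψ v x
    rw [hNF (v' + v) x, hNF v' (cantorPsi hm e φ c i0 v x), h1, h2, hTTadd, cantorI_R hm e]
    have hcomp1 : cantorR hm e ((cantorI e (c x) + v i0) % (Nat.card K) + v' i0)
        = cantorR hm e (cantorI e (c x) + (v' + v) i0) := by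
      apply cantorR_congr
      rw [cantor_arith_mod]
      congr 1
      rw [Pi.add_apply]
      ring
    have hcomp2 : Function.update v' i0
          (((cantorI e (c x) + v i0) % (Nat.card K) + v' i0) / (Nat.card K : ℤ))
          + Function.update v i0 ((cantorI e (c x) + v i0) / (Nat.card K : ℤ))
        = Function.update (v' + v) i0
            ((cantorI e (c x) + (v' + v) i0) / (Nat.card K : ℤ)) := by
      funext j
      by_cases hj : j = i0
      · subst hj
        simp only [Pi.add_apply, Function.update_self]
        have harg : cantorI e (c x) + (v' i0 + v i0) = cantorI e (c x) + v i0 + v' i0 := by ring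
        rw [harg, cantor_arith_div _ hm]
        ring
      · simp only [Pi.add_apply, Function.update_of_ne hj]
    rw [hcomp1, hcomp2]
  · -- continuity
    intro v
    have hcfib : ∀ k : K, IsOpen {x | c x = k} := by
      intro k
      have hset : {x | c x = k} = (fun x => φ (k⁻¹, (0 : Fin d → ℤ)) x) ⁻¹' U := by
        ext x
        simp only [mem_setOf_eq, mem_preimage]
        constructor
        · rintro rfl; exact hc1 x
        · intro h; exact (hc2 x k h).symm
      rw [hset]
      exact (hUcl.preimage (hcont _)).isOpen
    have hpcont : Continuous (cantorP φ c) :=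
      cantor_piecewise_cont c hcfib (fun k y => φ (k⁻¹, 0) y) (fun k => hcont _)
    have hTTcont : ∀ w, Continuous (cantorTT φ c w) := fun w => hpcont.comp (hcont (1, w))
    exact cantor_piecewise_cont c hcfib
      (fun k y => φ (cantorR hm e (cantorI e k + v i0), 0)
        (cantorTT φ c (Function.update v i0 ((cantorI e k + v i0) / (Nat.card K : ℤ)))
          (cantorP φ c y)))
      (fun k => (hcont _).comp ((hTTcont _).comp hpcont))
  · -- freeness
    intro v x hvx
    have hmz : (Nat.card K : ℤ) ≠ 0 := by exact_mod_cast hm.ne'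
    have h1 := hcψ v x
    rw [hvx] at h1
    have h2 := hpψ v x
    rw [hvx] at h2
    set w : Fin d → ℤ := Function.update v i0 ((cantorI e (c x) + v i0) / (Nat.card K : ℤ))
      with hwdef
    have h3 : φ ((c (φ (1, w) (cantorP φ c x)))⁻¹ * 1, 0 + w) (cantorP φ c x)
        = cantorP φ c x := by
      rw [← hcomp]
      exact h2.symm
    have h4 := hfree _ _ h3
    have h5 : (0 : Fin d → ℤ) + w = 0 := congrArg Prod.snd h4
    have hw0 : w = 0 := by rwa [zero_add] at h5
    have h6 : cantorI e (c x) = (cantorI e (c x) + v i0) % (Nat.card K) := by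
      have h6' := congrArg (cantorI e) h1
      rwa [cantorI_R] at h6'
    have h7 : (cantorI e (c x) + v i0) / (Nat.card K : ℤ) = 0 := by
      have h7' : Function.update v i0 ((cantorI e (c x) + v i0) / (Nat.card K : ℤ)) i0
          = (0 : Fin d → ℤ) i0 := by rw [← hwdef]; exact congrFun hw0 i0
      rw [Function.update_self] at h7'
      simpa using h7'
    have h8 : v i0 = 0 := by
      have hh := Int.mul_ediv_add_emod (cantorI e (c x) + v i0) (Nat.card K)
      rw [h7, ← h6] at hh
      omega
    funext j
    by_cases hj : j = i0
    · subst hj; simpa using h8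
    · have h9 : Function.update v i0 ((cantorI e (c x) + v i0) / (Nat.card K : ℤ)) j
          = (0 : Fin d → ℤ) j := by rw [← hwdef]; exact congrFun hw0 j
      rw [Function.update_of_ne hj] at h9
      simpa using h9
  · -- orbits
    intro x
    have hmz : (Nat.card K : ℤ) ≠ 0 := by exact_mod_cast hm.ne'
    ext y
    simp only [mem_setOf_eq]
    constructor
    · rintro ⟨⟨a, t⟩, rfl⟩
      refine ⟨Function.update t i0 ((Nat.card K : ℤ) * t i0
        + cantorI e (c (φ (a, t) x)) - cantorI e (c x)), ?_⟩
      rw [hNF]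
      have hv0 : Function.update t i0 ((Nat.card K : ℤ) * t i0
          + cantorI e (c (φ (a, t) x)) - cantorI e (c x)) i0
          = (Nat.card K : ℤ) * t i0 + cantorI e (c (φ (a, t) x)) - cantorI e (c x) :=
        Function.update_self _ _ _
      have hval : cantorI e (c x) + Function.update t i0 ((Nat.card K : ℤ) * t i0
          + cantorI e (c (φ (a, t) x)) - cantorI e (c x)) i0
          = cantorI e (c (φ (a, t) x)) + (Nat.card K : ℤ) * t i0 := by rw [hv0]; ring
      have hR : cantorR hm e (cantorI e (c x) + Function.update t i0 ((Nat.card K : ℤ) * t i0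
          + cantorI e (c (φ (a, t) x)) - cantorI e (c x)) i0) = c (φ (a, t) x) := by
        rw [hval]
        calc cantorR hm e (cantorI e (c (φ (a, t) x)) + (Nat.card K : ℤ) * t i0)
            = cantorR hm e (cantorI e (c (φ (a, t) x))) :=
              cantorR_congr hm e (Int.add_mul_emod_self_left _ _ _)
          _ = c (φ (a, t) x) := cantorR_I hm e _
      have hQ : (cantorI e (c x) + Function.update t i0 ((Nat.card K : ℤ) * t i0
          + cantorI e (c (φ (a, t) x)) - cantorI e (c x)) i0) / (Nat.card K : ℤ) = t i0 := by
        rw [hval, Int.add_mul_ediv_left _ _ hmz,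
          Int.ediv_eq_zero_of_lt (cantorI_nonneg e _) (cantorI_lt e _), zero_add]
      have hW : Function.update (Function.update t i0 ((Nat.card K : ℤ) * t i0
          + cantorI e (c (φ (a, t) x)) - cantorI e (c x))) i0
          ((cantorI e (c x) + Function.update t i0 ((Nat.card K : ℤ) * t i0
          + cantorI e (c (φ (a, t) x)) - cantorI e (c x)) i0) / (Nat.card K : ℤ)) = t := by
        funext j
        by_cases hj : j = i0
        · subst hj; rw [Function.update_self, hQ]
        · rw [Function.update_of_ne hj, Function.update_of_ne hj]
      rw [hR, hW]
      have e1 : φ (1, t) (cantorP φ c x) = φ ((c x)⁻¹, t) x := by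
        calc φ (1, t) (φ ((c x)⁻¹, 0) x) = φ (1 * (c x)⁻¹, t + 0) x := hcomp _ _ _ _ _
          _ = φ ((c x)⁻¹, t) x := by rw [one_mul, add_zero]
      have e2 : φ (a, t) x = φ (a * c x, 0) (φ ((c x)⁻¹, t) x) := by
        rw [hcomp]
        have hgr : a * c x * (c x)⁻¹ = a := by group
        rw [hgr, zero_add]
      have hTTt : cantorTT φ c t (cantorP φ c x) = cantorP φ c (φ (a, t) x) := by
        show cantorP φ c (φ (1, t) (cantorP φ c x)) = cantorP φ c (φ (a, t) x)
        rw [e1, e2, hp_shift]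
      rw [hTTt]
      calc φ (c (φ (a,t) x), 0) (cantorP φ c (φ (a,t) x))
          = φ (c (φ (a,t) x), 0) (φ ((c (φ (a,t) x))⁻¹, 0) (φ (a,t) x)) := rfl
        _ = φ (c (φ (a,t) x) * (c (φ (a,t) x))⁻¹, 0) (φ (a,t) x) := hKmul _ _ _
        _ = φ (a, t) x := by
            have hgr : c (φ (a,t) x) * (c (φ (a,t) x))⁻¹ = 1 := by group
            rw [hgr, hone]
    · rintro ⟨v, rfl⟩
      have step : ∀ (h : K × (Fin d → ℤ)) (z : X), (∃ g, φ g x = z) → ∃ g, φ g x = φ h z := by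
        rintro h z ⟨g, rfl⟩
        exact ⟨(h.1 * g.1, h.2 + g.2), hmul h g x⟩
      have s0 : ∃ g, φ g x = x := ⟨(1, 0), hone x⟩
      have s1 : ∃ g, φ g x = cantorP φ c x := step ((c x)⁻¹, 0) x s0
      have s2 : ∃ g, φ g x = φ (1, Function.update v i0
          ((cantorI e (c x) + v i0) / (Nat.card K : ℤ))) (cantorP φ c x) := step _ _ s1
      have s3 : ∃ g, φ g x = cantorTT φ c (Function.update v i0
          ((cantorI e (c x) + v i0) / (Nat.card K : ℤ))) (cantorP φ c x) :=
        step ((c (φ (1, Function.update v i0 ((cantorI e (c x) + v i0) / (Nat.card K : ℤ)))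
          (cantorP φ c x)))⁻¹, 0) _ s2
      rw [hNF]
      exact step _ _ s3

theorem exists_clopen_fd {K X : Type*} [Group K] [Finite K] [TopologicalSpace X]
    [CompactSpace X] [T2Space X] [TotallyDisconnectedSpace X]
    (f : K → X → X)
    (hone : ∀ x, f 1 x = x)
    (hmul : ∀ a b x, f (a * b) x = f a (f b x))
    (hcont : ∀ a, Continuous (f a))
    (hfree : ∀ a x, f a x = x → a = 1) :
    ∃ U : Set X, IsClopen U ∧ ∀ x, ∃! k : K, f k x ∈ U := by
  classical
  -- Step A: around each point a clopen set whose translates are disjoint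
  have hstep : ∀ x : X, ∃ V : Set X, IsClopen V ∧ x ∈ V ∧
      ∀ c : K, c ≠ 1 → ∀ y ∈ V, f c y ∉ V := by
    intro x
    have hD : ∀ c : K, ∃ D : Set X, IsClopen D ∧ x ∈ D ∧ (c ≠ 1 → f c x ∉ D) := by
      intro c
      by_cases hc : c = 1
      · exact ⟨univ, isClopen_univ, mem_univ x, fun h => absurd hc h⟩
      · have hne : f c x ≠ x := fun h => hc (hfree c x h)
        obtain ⟨C, hC, hfC, hxC⟩ := exists_isClopen_of_totally_separated hne
        exact ⟨Cᶜ, hC.compl, hxC, fun _ h => h hfC⟩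
    choose D hDcl hxD hfD using hD
    refine ⟨⋂ c : K, (if c = 1 then univ else D c ∩ (f c) ⁻¹' (D c)ᶜ), ?_, ?_, ?_⟩
    · refine isClopen_iInter_of_finite fun c => ?_
      split_ifs with h
      · exact isClopen_univ
      · exact (hDcl c).inter (((hDcl c).compl).preimage (hcont c))
    · refine mem_iInter.2 fun c => ?_
      split_ifs with h
      · exact mem_univ x
      · exact ⟨hxD c, hfD c h⟩
    · intro c hc y hy hfy
      have h1 := mem_iInter.1 hy c
      have h2 := mem_iInter.1 hfy c
      rw [if_neg hc] at h1 h2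
      exact h1.2 h2.1
  choose V hVcl hxV hVprop using hstep
  -- Step B: finite subcover
  obtain ⟨t, ht⟩ := IsCompact.elim_finite_subcover (isCompact_univ (X := X))
    (fun x => V x) (fun x => (hVcl x).isOpen) (fun y _ => mem_iUnion.2 ⟨y, hxV y⟩)
  set L : List X := t.toList with hL
  set n : ℕ := L.length with hn
  set Vs : ℕ → Set X := fun j => if h : j < n then V (L.get ⟨j, h⟩) else ∅ with hVs
  have hVscl : ∀ j, IsClopen (Vs j) := by
    intro j; rw [hVs]; dsimp only; split_ifs with h
    · exact hVcl _
    · exact isClopen_empty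
  have hVsprop : ∀ j, ∀ c : K, c ≠ 1 → ∀ y ∈ Vs j, f c y ∉ Vs j := by
    intro j c hc y hy hfy
    rw [hVs] at hy hfy; dsimp only at hy hfy
    split_ifs at hy hfy with h
    · exact hVprop _ c hc y hy hfy
    · exact hy
  have hcover : ∀ x : X, ∃ j, j < n ∧ x ∈ Vs j := by
    intro x
    obtain ⟨z, hz⟩ := mem_iUnion.1 (ht (mem_univ x))
    simp only [mem_iUnion] at hz
    obtain ⟨hzt, hxz⟩ := hz
    have hzL : z ∈ L := by rw [hL]; exact Finset.mem_toList.2 hzt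
    obtain ⟨i, hi⟩ := List.get_of_mem hzL
    refine ⟨i, i.isLt, ?_⟩
    rw [hVs]; dsimp only
    rw [dif_pos i.isLt]
    have : L.get ⟨(i:ℕ), i.isLt⟩ = L.get i := by congr
    rw [this, hi]; exact hxz
  -- orbit saturation
  set Orb : Set X → Set X := fun S => ⋃ c : K, (f c) ⁻¹' S with hOrb
  have hOrb_mem : ∀ (S : Set X) x, x ∈ Orb S ↔ ∃ c, f c x ∈ S := by
    intro S x; rw [hOrb]; simp [mem_iUnion]
  have hOrb_inv : ∀ (S : Set X) (a : K) x, f a x ∈ Orb S ↔ x ∈ Orb S := by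
    intro S a x
    rw [hOrb_mem, hOrb_mem]
    constructor
    · rintro ⟨c, hc⟩; exact ⟨c * a, by rw [hmul]; exact hc⟩
    · rintro ⟨c, hc⟩
      refine ⟨c * a⁻¹, ?_⟩
      rw [← hmul, inv_mul_cancel_right]
      exact hc
  have hOrbcl : ∀ j, IsClopen (Orb (Vs j)) := by
    intro j; rw [hOrb]
    exact isClopen_iUnion_of_finite fun c => (hVscl j).preimage (hcont c)
  -- the fundamental domain
  set prev : ℕ → Set X := fun j => ⋃ i : Fin n, (if (i : ℕ) < j then Orb (Vs i) else ∅)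
    with hprev
  have hprev_mem : ∀ j x, x ∈ prev j ↔ ∃ i : Fin n, (i : ℕ) < j ∧ x ∈ Orb (Vs i) := by
    intro j x
    rw [hprev]; simp only [mem_iUnion]
    constructor
    · rintro ⟨i, hi⟩
      by_cases h : (i : ℕ) < j
      · rw [if_pos h] at hi; exact ⟨i, h, hi⟩
      · rw [if_neg h] at hi; exact absurd hi (notMem_empty x)
    · rintro ⟨i, h, hi⟩; exact ⟨i, by rw [if_pos h]; exact hi⟩
  have hprevcl : ∀ j, IsClopen (prev j) := by
    intro j; rw [hprev]
    refine isClopen_iUnion_of_finite fun i => ?_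
    split_ifs with h
    · exact hOrbcl i
    · exact isClopen_empty
  refine ⟨⋃ j : Fin n, (Vs j \ prev j), ?_, ?_⟩
  · exact isClopen_iUnion_of_finite fun j => (hVscl j).diff (hprevcl j)
  · intro x
    -- existence
    have hex : ∃ j, j < n ∧ x ∈ Orb (Vs j) := by
      obtain ⟨j, hj, hxj⟩ := hcover x
      exact ⟨j, hj, (hOrb_mem _ x).2 ⟨1, by rw [hone]; exact hxj⟩⟩
    set j0 : ℕ := Nat.find hex with hj0
    obtain ⟨hj0n, hj0orb⟩ := Nat.find_spec hex
    obtain ⟨k, hk⟩ := (hOrb_mem _ x).1 hj0orb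
    have hkU : f k x ∈ ⋃ j : Fin n, (Vs j \ prev j) := by
      refine mem_iUnion.2 ⟨⟨j0, hj0n⟩, hk, ?_⟩
      intro hmem
      obtain ⟨i, hij, hiorb⟩ := (hprev_mem _ _).1 hmem
      have hxorb : x ∈ Orb (Vs i) := (hOrb_inv _ k x).1 hiorb
      exact Nat.find_min hex hij ⟨i.isLt, hxorb⟩
    refine ⟨k, hkU, ?_⟩
    -- uniqueness
    intro b hb
    obtain ⟨j1, hb'⟩ := mem_iUnion.1 hb
    have hb1 : f b x ∈ Vs j1 := hb'.1
    have hb2 : f b x ∉ prev j1 := hb'.2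
    have hk1 : f k x ∈ Vs j0 ∧ f k x ∉ prev j0 := by
      refine ⟨hk, fun hmem => ?_⟩
      obtain ⟨i, hij, hiorb⟩ := (hprev_mem _ _).1 hmem
      exact Nat.find_min hex hij ⟨i.isLt, (hOrb_inv _ k x).1 hiorb⟩
    -- show the indices agree
    have hkey : ∀ (a2 b2 : K) (j j' : Fin n), f a2 x ∈ Vs j → f b2 x ∈ Vs j' \ prev j' →
        ¬ ((j : ℕ) < (j' : ℕ)) := by
      intro a2 b2 j j' ha2 hb3 hlt
      have hmm : f b2 x ∈ Orb (Vs j) := by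
        refine (hOrb_inv _ b2 x).2 ?_
        exact (hOrb_inv _ a2 x).1 ((hOrb_mem _ _).2 ⟨1, by rw [hone]; exact ha2⟩)
      exact hb3.2 ((hprev_mem _ _).2 ⟨j, hlt, hmm⟩)
    have hjj : (j1 : ℕ) = j0 := by
      rcases Nat.lt_trichotomy (j1 : ℕ) j0 with h | h | h
      · exact absurd h (hkey b k j1 (⟨j0, hj0n⟩ : Fin n) hb1 ⟨hk1.1, hk1.2⟩)
      · exact h
      · exact absurd h (hkey k b (⟨j0, hj0n⟩ : Fin n) j1 hk ⟨hb1, hb2⟩)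
    -- same piece: use the disjointness property
    have hbk : f b x ∈ Vs j0 := hjj ▸ hb1
    have hfb : f (b * k⁻¹) (f k x) = f b x := by
      rw [← hmul, inv_mul_cancel_right]
    by_contra hbne
    have hne1 : b * k⁻¹ ≠ 1 := by
      intro h
      exact hbne (by rw [← one_mul k, ← h, inv_mul_cancel_right])
    exact hVsprop _ _ hne1 (f k x) hk (hfb ▸ hbk)


/-- Let `K` be a finite group, `d ≥ 1`, and let `φ` be a free action of `K × ℤ^d`
by homeomorphisms on a Cantor set `X`. Then there is a free action `ψ` of `ℤ^d` by
homeomorphisms on `X` with the same orbits: for every `x ∈ X`,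
`{φ^g(x) : g ∈ K × ℤ^d} = {ψ^n(x) : n ∈ ℤ^d}`. -/
theorem stmt18 {K X : Type*} [Group K] [Finite K] (d : ℕ) (hd : 1 ≤ d)
    [TopologicalSpace X] [CompactSpace X] [TopologicalSpace.MetrizableSpace X]
    [TotallyDisconnectedSpace X] [Nonempty X]
    (hperf : Perfect (Set.univ : Set X))
    (φ : K × (Fin d → ℤ) → X → X)
    (hone : ∀ x, φ (1, 0) x = x)
    (hmul : ∀ g h : K × (Fin d → ℤ), ∀ x, φ (g.1 * h.1, g.2 + h.2) x = φ g (φ h x))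
    (hcont : ∀ g, Continuous (φ g))
    (hfree : ∀ g x, φ g x = x → g = (1, 0)) :
    ∃ ψ : (Fin d → ℤ) → X → X,
      (∀ x, ψ 0 x = x) ∧
      (∀ m n x, ψ (m + n) x = ψ m (ψ n x)) ∧
      (∀ n, Continuous (ψ n)) ∧
      (∀ n x, ψ n x = x → n = 0) ∧
      ∀ x : X, {y | ∃ g, φ g x = y} = {y | ∃ n, ψ n x = y} := by
  obtain ⟨U, hUcl, hUfd⟩ := exists_clopen_fd (fun k : K => φ (k, 0))
    hone
    (fun a b x => by have h := hmul (a, 0) (b, 0) x; simpa using h)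
    (fun a => hcont _)
    (fun a x h => congrArg Prod.fst (hfree (a, 0) x h))
  exact cantor_build d hd φ hone hmul hcont hfree U hUcl hUfd
end
end

section
/- Let X ⊆ Ω be a flat Cantor transversal for a free minimal continuous action φ of ℝ^d on a compact metrizable space Ω. Then the induced equivalence relation R_φ on X is minimal; that is, for every x ∈ X, the set {φ^p(x) : p ∈ ℝ^d, φ^p(x) ∈ X} is dense in X. -/
noncomputable section

open Metric

variable {d : ℕ} {Ω : Type*} [TopologicalSpace Ω]

/-- `φ` is a continuous action of `ℝ^d` on `Ω` by homeomorphisms. -/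
def IsCtsAction (φ : EuclideanSpace ℝ (Fin d) → Ω → Ω) : Prop :=
  Continuous (fun q : EuclideanSpace ℝ (Fin d) × Ω => φ q.1 q.2) ∧
    (∀ x, φ 0 x = x) ∧ ∀ p q x, φ (p + q) x = φ p (φ q x)

/-- The action `φ` is free. -/
def IsFreeAction (φ : EuclideanSpace ℝ (Fin d) → Ω → Ω) : Prop :=
  ∀ p x, φ p x = x → p = 0

/-- The action `φ` is minimal: every orbit is dense. -/
def IsMinimalAction (φ : EuclideanSpace ℝ (Fin d) → Ω → Ω) : Prop :=
  ∀ x : Ω, Dense (Set.range fun p => φ p x)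

/-- `U` is a clopen subset of `X` (in the subspace topology of `X`). -/
def ClopenIn (U X : Set Ω) : Prop :=
  U ⊆ X ∧ IsClopen (Subtype.val ⁻¹' U : Set X)

/-- `X ⊆ Ω` is a flat Cantor transversal for the free action `φ` of `ℝ^d` on `Ω`:
(1) `X` is a Cantor set (non-empty, closed — hence compact —, totally disconnected,
without isolated points); (2) every `φ`-orbit meets `X`; (3) there is `M > 0` such
that `C = {φ^p(x) : x ∈ X, p ∈ B(0,M)}` is open and `(x,p) ↦ φ^p(x)` is a
homeomorphism from `X × B(0,M)` onto `C`; (4) the return times to `X` in a bounded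
window are locally constant. -/
def FlatCantorTransversal (φ : EuclideanSpace ℝ (Fin d) → Ω → Ω) (X : Set Ω) : Prop :=
  Perfect X ∧ X.Nonempty ∧ IsTotallyDisconnected X ∧
  (∀ x : Ω, ∃ p, φ p x ∈ X) ∧
  (∃ M : ℝ, 0 < M ∧
    IsOpen {ω : Ω | ∃ x ∈ X, ∃ p ∈ ball (0 : EuclideanSpace ℝ (Fin d)) M, φ p x = ω} ∧
    ∃ e : (X × ball (0 : EuclideanSpace ℝ (Fin d)) M) ≃ₜ
        {ω : Ω | ∃ x ∈ X, ∃ p ∈ ball (0 : EuclideanSpace ℝ (Fin d)) M, φ p x = ω},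
      ∀ xp : X × ball (0 : EuclideanSpace ℝ (Fin d)) M,
        (e xp : Ω) = φ (xp.2 : EuclideanSpace ℝ (Fin d)) (xp.1 : Ω)) ∧
  (∀ x ∈ X, ∀ r : ℝ, 0 < r → ∃ U ⊆ X, x ∈ U ∧ (∃ O, IsOpen O ∧ U = O ∩ X) ∧
    ∀ y ∈ U, {p ∈ ball (0 : EuclideanSpace ℝ (Fin d)) r | φ p x ∈ X}
      = {p ∈ ball (0 : EuclideanSpace ℝ (Fin d)) r | φ p y ∈ X})

/-- `P_U(x) = {p ∈ ℝ^d : φ^p(x) ∈ U}`. -/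
def Porbit (φ : EuclideanSpace ℝ (Fin d) → Ω → Ω) (U : Set Ω) (x : Ω) :
    Set (EuclideanSpace ℝ (Fin d)) :=
  {p | φ p x ∈ U}

/-- If `X ⊆ Ω` is a flat Cantor transversal for a free minimal continuous action `φ`
of `ℝ^d` on a compact metrizable space `Ω`, then the induced equivalence relation
`R_φ` on `X` is minimal: for every `x ∈ X`, the set
`{φ^p(x) : p ∈ ℝ^d, φ^p(x) ∈ X}` is dense in `X`. -/
theorem stmt19 [CompactSpace Ω] [TopologicalSpace.MetrizableSpace Ω] (hd : 1 ≤ d)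
    (φ : EuclideanSpace ℝ (Fin d) → Ω → Ω) (X : Set Ω)
    (hact : IsCtsAction φ) (hfree : IsFreeAction φ) (hmin : IsMinimalAction φ)
    (hX : FlatCantorTransversal φ X) :
    ∀ x ∈ X, ∀ O : Set Ω, IsOpen O → (O ∩ X).Nonempty →
      ∃ p : EuclideanSpace ℝ (Fin d), φ p x ∈ O ∩ X := by
  obtain ⟨-, -, -, -, ⟨M, hM, hCopen, e, he⟩, -⟩ := hX
  rintro x hx O hO ⟨y, hyO, hyX⟩
  set S : Set (X × ball (0 : EuclideanSpace ℝ (Fin d)) M) :=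
    {xp | (xp.1 : Ω) ∈ O} with hS
  have hSopen : IsOpen S :=
    hO.preimage (continuous_subtype_val.comp continuous_fst)
  have hWopen : IsOpen (Subtype.val '' (e '' S) : Set Ω) :=
    hCopen.isOpenMap_subtype_val _ (e.isOpen_image.mpr hSopen)
  have hWne : (Subtype.val '' (e '' S) : Set Ω).Nonempty := by
    refine ⟨y, ⟨e (⟨y, hyX⟩, ⟨0, by simpa using hM⟩), ⟨_, hyO, rfl⟩, ?_⟩⟩
    rw [he]
    exact hact.2.1 y
  obtain ⟨ω, ⟨p, rfl⟩, hωW⟩ := (hmin x).exists_mem_open hWopen hWne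
  obtain ⟨c, ⟨xp, hxpS, rfl⟩, hc⟩ := hωW
  rw [he] at hc
  set q : EuclideanSpace ℝ (Fin d) := (xp.2 : EuclideanSpace ℝ (Fin d))
  set z : Ω := (xp.1 : Ω)
  refine ⟨-q + p, ?_⟩
  have : φ (-q + p) x = z := by
    have hc' : φ q z = φ p x := hc
    rw [hact.2.2, ← hc', ← hact.2.2, neg_add_cancel, hact.2.1]
  rw [this]
  exact ⟨hxpS, xp.1.2⟩
end
end
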